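/- arXiv:2402.05242 — 12 statements merged into one kernel-verified Lean document; each statement's English description precedes it below -/
import Mathlib

section
/- Let C ⊆ ℕ^d be an affine semigroup and let S be a submonoid of C such that C \ S is a finite set. Then S is finitely generated (hence S is itself an affine semigroup). -/
/-- Let `C ⊆ ℕ^d` be an affine semigroup (a finitely generated submonoid of `ℕ^d`)
and let `S` be a submonoid of `C` such that `C \ S` is finite.
Then `S` is finitely generated. -/
theorem stmt0 {d : ℕ} (C S : AddSubmonoid (Fin d → ℕ)) (hC : C.FG) (hSC : S ≤ C)
    (hfin : ((C : Set (Fin d → ℕ)) \ (S : Set (Fin d → ℕ))).Finite) : S.FG := by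
  classical
  obtain ⟨G, hG⟩ := hC
  set nrm : (Fin d → ℕ) → ℕ := fun x => ∑ i, x i with hnrm
  have nrm_add : ∀ a b, nrm (a + b) = nrm a + nrm b := by
    intro a b; simp [hnrm, Finset.sum_add_distrib]
  have nrm_zero : nrm 0 = 0 := by simp [hnrm]
  set M : ℕ := G.sup nrm with hM
  set F : Finset (Fin d → ℕ) := hfin.toFinset with hF
  set N : ℕ := F.sup nrm with hN
  -- any element of C with norm > N is in S
  have big_mem : ∀ x, x ∈ C → N < nrm x → x ∈ S := by
    intro x hxC hxN
    by_contra hxS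
    have : x ∈ F := by simp [hF, Set.Finite.mem_toFinset, Set.mem_diff]; exact ⟨hxC, hxS⟩
    exact absurd (Finset.le_sup (f := nrm) this) (by omega)
  have hGC : ∀ g ∈ G, g ∈ C := by
    intro g hg; rw [← hG]; exact AddSubmonoid.subset_closure hg
  -- splitting lemma
  have split : ∀ (l : List (Fin d → ℕ)), (∀ y ∈ l, y ∈ G) → ∀ r, r ∈ C → nrm r ≤ N →
      N < nrm (r + l.sum) → ∃ p q, p ∈ C ∧ q ∈ C ∧ r + l.sum = p + q ∧
        N < nrm p ∧ nrm p ≤ N + M := by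
    intro l
    induction l with
    | nil => intro _ r _ hr hbig; simp [nrm_add, nrm_zero] at hbig; omega
    | cons a t ih =>
      intro hmem r hrC hrN hbig
      have haG : a ∈ G := hmem a List.mem_cons_self
      have haC : a ∈ C := hGC a haG
      have haM : nrm a ≤ M := Finset.le_sup haG
      have hra : r + a ∈ C := add_mem hrC haC
      by_cases h : N < nrm (r + a)
      · refine ⟨r + a, t.sum, hra, ?_, ?_, h, ?_⟩
        · rw [← hG]; exact list_sum_mem fun y hy => AddSubmonoid.subset_closure (hmem y (List.mem_cons_of_mem a hy))
        · rw [List.sum_cons, ← add_assoc]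
        · rw [nrm_add]; omega
      · have := ih (fun y hy => hmem y (List.mem_cons_of_mem a hy)) (r + a) hra (by omega)
          (by rw [add_assoc, ← List.sum_cons]; exact hbig)
        obtain ⟨p, q, hp, hq, heq, h1, h2⟩ := this
        exact ⟨p, q, hp, hq, by rw [List.sum_cons, ← add_assoc, heq], h1, h2⟩
  set B : ℕ := 2 * N + M with hB
  set A : Set (Fin d → ℕ) := {x | x ∈ S ∧ nrm x ≤ B} with hA
  have hAfin : A.Finite := by
    have : A ⊆ Set.pi Set.univ (fun _ : Fin d => Set.Iic B) := by
      intro x hx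
      intro i _
      have : x i ≤ nrm x := Finset.single_le_sum (fun j _ => Nat.zero_le _) (Finset.mem_univ i)
      exact le_trans this hx.2
    exact Set.Finite.subset (Set.Finite.pi fun _ => Set.finite_Iic B) this
  have main : ∀ n x, x ∈ S → nrm x = n → x ∈ AddSubmonoid.closure A := by
    intro n
    induction n using Nat.strong_induction_on with
    | _ n ih =>
      intro x hxS hxn
      by_cases hsmall : nrm x ≤ B
      · exact AddSubmonoid.subset_closure ⟨hxS, hsmall⟩
      · have hxC : x ∈ C := hSC hxS
        have hxcl : x ∈ AddSubmonoid.closure (G : Set (Fin d → ℕ)) := by rw [hG]; exact hxC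
        obtain ⟨l, hl, hls⟩ := AddSubmonoid.exists_list_of_mem_closure hxcl
        have hx0 : x = 0 + l.sum := by rw [zero_add, hls]
        obtain ⟨p, q, hpC, hqC, heq, hp1, hp2⟩ := split l hl 0 (zero_mem C)
          (by simp [nrm_zero]) (by rw [← hx0]; omega)
        rw [← hx0] at heq
        have hqN : N < nrm q := by
          have : nrm x = nrm p + nrm q := by rw [heq, nrm_add]
          omega
        have hpS : p ∈ S := big_mem p hpC hp1
        have hqS : q ∈ S := big_mem q hqC hqN
        have hqlt : nrm q < n := by
          have : nrm x = nrm p + nrm q := by rw [heq, nrm_add]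
          omega
        have hq_cl := ih (nrm q) hqlt q hqS rfl
        have hp_cl : p ∈ AddSubmonoid.closure A :=
          AddSubmonoid.subset_closure ⟨hpS, by omega⟩
        rw [heq]; exact add_mem hp_cl hq_cl
  rw [AddSubmonoid.fg_iff]
  refine ⟨A, ?_, hAfin⟩
  apply le_antisymm
  · exact (AddSubmonoid.closure_le.mpr (fun y hy => hy.1) : AddSubmonoid.closure A ≤ S)
  · intro x hx; exact main (nrm x) x hx rfl
end

section
/- Let C ⊆ ℕ^d be the additive submonoid generated by {g_1, g_2, …, g_n}, where g_j ≠ 0 for all j and g_j ≠ g_1 for all j ≥ 2. Suppose that g_1 cannot be written as a + b with a, b ∈ C \ {0}. Then C \ {g_1} is the additive submonoid of ℕ^d generated by {g_2, …, g_n} ∪ {g_1 + g_2, …, g_1 + g_n} ∪ {2g_1, 3g_1}. -/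
/-- If `C = ⟨g_0, g_1, …, g_n⟩ ⊆ ℕ^d` with all `g_j ≠ 0` and `g_j ≠ g_0` for `j ≠ 0`,
and `g_0` is a minimal generator of `C` (cannot be written as a sum of two nonzero
elements of `C`), then
`C \ {g_0} = ⟨{g_j : j ≠ 0} ∪ {g_0 + g_j : j ≠ 0} ∪ {2g_0, 3g_0}⟩`. -/
theorem stmt2 {d n : ℕ} (g : Fin (n + 1) → (Fin d → ℕ))
    (hne : ∀ j, g j ≠ 0) (hneq : ∀ j : Fin (n + 1), j ≠ 0 → g j ≠ g 0)
    (C : AddSubmonoid (Fin d → ℕ)) (hC : C = AddSubmonoid.closure (Set.range g))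
    (hmin : ¬ ∃ a b : Fin d → ℕ, a ∈ C ∧ a ≠ 0 ∧ b ∈ C ∧ b ≠ 0 ∧ g 0 = a + b) :
    (C : Set (Fin d → ℕ)) \ {g 0} =
      (AddSubmonoid.closure
        ((g '' {j | j ≠ 0}) ∪ ((fun j => g 0 + g j) '' {j | j ≠ 0}) ∪
          {2 • g 0, 3 • g 0}) : Set (Fin d → ℕ)) := by
  set S : Set (Fin d → ℕ) :=
    (g '' {j | j ≠ 0}) ∪ ((fun j => g 0 + g j) '' {j | j ≠ 0}) ∪ {2 • g 0, 3 • g 0} with hS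
  have h2 : (2 : ℕ) • g 0 = g 0 + g 0 := two_nsmul _
  have h3 : (3 : ℕ) • g 0 = g 0 + g 0 + g 0 := by
    rw [show (3:ℕ) = 2 + 1 by rfl, add_nsmul, two_nsmul, one_nsmul]
  have h2S : (2 : ℕ) • g 0 ∈ S := Or.inr (Or.inl rfl)
  have h3S : (3 : ℕ) • g 0 ∈ S := Or.inr (Or.inr rfl)
  ext x
  constructor
  · rintro ⟨hx, hx0⟩
    have hx' : x ∈ AddSubmonoid.closure (Set.range g) := by rwa [hC] at hx
    have key : x = 0 ∨ x = g 0 ∨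
        (x ∈ AddSubmonoid.closure S ∧ x + g 0 ∈ AddSubmonoid.closure S) := by
      clear hx hx0
      induction hx' using AddSubmonoid.closure_induction with
      | mem z hz =>
        obtain ⟨j, rfl⟩ := hz
        by_cases hj : j = 0
        · subst hj; exact Or.inr (Or.inl rfl)
        · refine Or.inr (Or.inr ⟨AddSubmonoid.subset_closure (Or.inl (Or.inl ⟨j, hj, rfl⟩)), ?_⟩)
          rw [add_comm]
          exact AddSubmonoid.subset_closure (Or.inl (Or.inr ⟨j, hj, rfl⟩))
      | zero => exact Or.inl rfl
      | add a b ha hb iha ihb =>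
        rcases iha with rfl | rfl | ⟨ha1, ha2⟩
        · simpa using ihb
        · rcases ihb with rfl | rfl | ⟨hb1, hb2⟩
          · simp
          · refine Or.inr (Or.inr ⟨?_, ?_⟩)
            · rw [← h2]; exact AddSubmonoid.subset_closure h2S
            · rw [← h3]; exact AddSubmonoid.subset_closure h3S
          · refine Or.inr (Or.inr ⟨?_, ?_⟩)
            · rw [add_comm]; exact hb2
            · rw [add_comm (g 0) b, add_assoc, ← h2, add_comm]
              exact add_mem (AddSubmonoid.subset_closure h2S) hb1
        · rcases ihb with rfl | rfl | ⟨hb1, hb2⟩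
          · simpa using Or.inr (Or.inr ⟨ha1, ha2⟩)
          · exact Or.inr (Or.inr ⟨ha2, by
              rw [add_assoc, ← h2]
              exact add_mem ha1 (AddSubmonoid.subset_closure h2S)⟩)
          · exact Or.inr (Or.inr ⟨add_mem ha1 hb1, by
              rw [add_assoc]; exact add_mem ha1 hb2⟩)
    rcases key with rfl | rfl | ⟨h1, _⟩
    · exact zero_mem _
    · exact absurd rfl hx0
    · exact h1
  · intro hx
    have hC' : ∀ y ∈ S, y ∈ C ∧ y ≠ g 0 := by
      rintro y ((⟨j, hj, rfl⟩ | ⟨j, hj, rfl⟩) | hy)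
      · exact ⟨by rw [hC]; exact AddSubmonoid.subset_closure ⟨j, rfl⟩, hneq j hj⟩
      · refine ⟨?_, ?_⟩
        · rw [hC]
          exact add_mem (AddSubmonoid.subset_closure ⟨0, rfl⟩)
            (AddSubmonoid.subset_closure ⟨j, rfl⟩)
        intro h
        nth_rewrite 2 [← add_zero (g 0)] at h
        exact hne j (add_left_cancel h)
      · have hadd : ∀ a b : Fin d → ℕ, a + b = 0 → a = 0 := by
          intro a b hab
          funext i
          have := congrFun hab i
          simpa using (Nat.add_eq_zero.mp (by simpa using this)).1
        simp only [Set.mem_insert_iff, Set.mem_singleton_iff] at hy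
        rcases hy with rfl | rfl
        · refine ⟨?_, ?_⟩
          · rw [hC, h2]
            exact add_mem (AddSubmonoid.subset_closure ⟨0, rfl⟩)
              (AddSubmonoid.subset_closure ⟨0, rfl⟩)
          intro h
          rw [h2] at h
          nth_rewrite 3 [← add_zero (g 0)] at h
          exact hne 0 (add_left_cancel h)
        · refine ⟨?_, ?_⟩
          · rw [hC, h3]
            exact add_mem (add_mem (AddSubmonoid.subset_closure ⟨0, rfl⟩)
              (AddSubmonoid.subset_closure ⟨0, rfl⟩)) (AddSubmonoid.subset_closure ⟨0, rfl⟩)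
          intro h
          rw [h3] at h
          nth_rewrite 4 [← zero_add (g 0)] at h
          exact hne 0 (hadd _ _ (add_right_cancel h))
    let C' : AddSubmonoid (Fin d → ℕ) :=
      { carrier := (C : Set (Fin d → ℕ)) \ {g 0}
        zero_mem' := ⟨zero_mem C, fun h => hne 0 (by simpa using h.symm)⟩
        add_mem' := by
          rintro a b ⟨haC, ha⟩ ⟨hbC, hb⟩
          refine ⟨add_mem haC hbC, fun hab => ?_⟩
          simp only [Set.mem_singleton_iff] at hab ha hb
          by_cases ha0 : a = 0
          · exact hb (by simpa [ha0] using hab)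
          by_cases hb0 : b = 0
          · exact ha (by simpa [hb0] using hab)
          exact hmin ⟨a, b, haC, ha0, hbC, hb0, hab.symm⟩ }
    have : AddSubmonoid.closure S ≤ C' := AddSubmonoid.closure_le.mpr (fun y hy => hC' y hy)
    exact this hx
end

section
/- Let C ⊆ ℕ^d be the additive submonoid generated by g_1, …, g_n with g_i ≠ 0 for every i, let f_C : ℕ^n → C be the monoid homomorphism sending (a_1, …, a_n) to Σ_{i=1}^n a_i g_i, and let S be a submonoid of C. Then C \ S is a finite set if and only if ℕ^n \ f_C^{-1}(S) is a finite set. -/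
/-- Let `C = ⟨g_1, …, g_n⟩ ⊆ ℕ^d` with all `g_i ≠ 0`, let `f_C : ℕ^n → C` be
`a ↦ Σ_i a_i g_i`, and let `S ⊆ C` be a submonoid. Then `C \ S` is finite iff
`ℕ^n \ f_C⁻¹(S)` is finite. -/
theorem stmt4 {d n : ℕ} (g : Fin n → (Fin d → ℕ)) (hg : ∀ i, g i ≠ 0)
    (C S : AddSubmonoid (Fin d → ℕ))
    (hC : C = AddSubmonoid.closure (Set.range g)) (hSC : S ≤ C) :
    ((C : Set (Fin d → ℕ)) \ (S : Set (Fin d → ℕ))).Finite ↔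
      ({a : Fin n → ℕ | (∑ i, a i • g i) ∈ S}ᶜ).Finite := by
  set F : (Fin n → ℕ) → (Fin d → ℕ) := fun a => ∑ i, a i • g i with hF
  -- fibers of F are finite
  have hfiber : ∀ c : Fin d → ℕ, {a : Fin n → ℕ | F a = c}.Finite := by
    intro c
    apply Set.Finite.subset (Set.Finite.pi (fun i : Fin n => Set.finite_Iic (∑ j, c j)))
    intro a ha
    simp only [Set.mem_pi, Set.mem_univ, Set.mem_Iic, forall_true_left]
    intro i
    obtain ⟨j, hj⟩ : ∃ j, g i j ≠ 0 := by
      by_contra h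
      push_neg at h
      exact hg i (funext h)
    have h1 : a i ≤ a i * g i j := Nat.le_mul_of_pos_right _ (Nat.pos_of_ne_zero hj)
    have h2 : a i * g i j ≤ ∑ k, a k * g k j := by
      apply Finset.single_le_sum (f := fun k => a k * g k j) (fun k _ => Nat.zero_le _)
      exact Finset.mem_univ i
    have h3 : (∑ k, a k * g k j) = c j := by
      have := congrFun ha j
      simpa [hF, Finset.sum_apply] using this
    have h4 : c j ≤ ∑ j', c j' :=
      Finset.single_le_sum (f := fun j' => c j') (fun _ _ => Nat.zero_le _) (Finset.mem_univ j)
    omega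
  -- F maps into C
  have hmem : ∀ a, F a ∈ C := by
    intro a
    rw [hC]
    exact AddSubmonoid.sum_mem _ fun i _ =>
      AddSubmonoid.nsmul_mem _ (AddSubmonoid.subset_closure (Set.mem_range_self i)) _
  -- F is surjective onto C
  have hsurj : ∀ c ∈ C, ∃ a, F a = c := by
    intro c hc
    rw [hC] at hc
    induction hc using AddSubmonoid.closure_induction with
    | mem x hx =>
      obtain ⟨i, rfl⟩ := hx
      refine ⟨Pi.single i 1, ?_⟩
      show (∑ k, Pi.single i 1 k • g k) = g i
      rw [Finset.sum_eq_single_of_mem i (Finset.mem_univ i)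
        (fun k _ hk => by simp [Pi.single_apply, hk])]
      simp
    | zero => exact ⟨0, by show (∑ k, (0 : Fin n → ℕ) k • g k) = 0; simp⟩
    | add x y hx hy ihx ihy =>
      obtain ⟨a, ha⟩ := ihx
      obtain ⟨b, hb⟩ := ihy
      refine ⟨a + b, ?_⟩
      show (∑ k, (a k + b k) • g k) = x + y
      rw [← ha, ← hb]
      show _ = (∑ k, a k • g k) + (∑ k, b k • g k)
      rw [← Finset.sum_add_distrib]
      exact Finset.sum_congr rfl fun k _ => add_smul _ _ _
  constructor
  · intro h
    apply Set.Finite.subset (Set.Finite.biUnion h (fun c _ => hfiber c))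
    intro a ha
    simp only [Set.mem_compl_iff, Set.mem_setOf_eq] at ha
    exact Set.mem_biUnion ⟨hmem a, ha⟩ rfl
  · intro h
    apply Set.Finite.subset (h.image F)
    rintro c ⟨hcC, hcS⟩
    obtain ⟨a, ha⟩ := hsurj c hcC
    refine ⟨a, ?_, ha⟩
    simp only [Set.mem_compl_iff, Set.mem_setOf_eq]
    exact fun h => hcS (by rw [← ha]; exact h)
end

section
/- Let A ⊆ ℕ^n and let e_1, …, e_n denote the standard basis vectors of ℕ^n. Then the submonoid ⟨A⟩ has finite complement in ℕ^n if and only if both of the following hold: (1) for every i ∈ {1,…,n} there exist s_i ≥ 1 and positive integers a_1^{(i)}, …, a_{s_i}^{(i)} with a_j^{(i)} e_i ∈ A for all j and gcd(a_1^{(i)}, …, a_{s_i}^{(i)}) = 1; (2) for all i, j ∈ {1,…,n} with i ≠ j there exists n_i^{(j)} ∈ ℕ such that e_i + n_i^{(j)} e_j ∈ A. -/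
lemma step6 (S : AddSubmonoid ℕ) (a g q : ℕ) (ha : a ∈ S) (hq : q ∈ S) (hqg : q + g ∈ S) :
    ∃ q' ∈ S, q' + Nat.gcd a g ∈ S := by
  rcases Nat.eq_zero_or_pos a with rfl | hapos
  · exact ⟨q, hq, by simpa using hqg⟩
  rcases Nat.eq_zero_or_pos g with rfl | hgpos
  · exact ⟨0, zero_mem _, by simpa using ha⟩
  -- Bezout
  set d := Nat.gcd a g with hd
  obtain ⟨u, v, huv⟩ : ∃ u v : ℤ, (d : ℤ) = a * u + g * v := ⟨_, _, Nat.gcd_eq_gcd_ab a g⟩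
  set k : ℤ := u.natAbs + 1 with hk
  have hU : 0 < u + k * g := by
    have : (u.natAbs : ℤ) + u ≥ 0 := by omega
    nlinarith [Int.natCast_pos.2 hgpos]
  have hkey : (a : ℤ) * (u + k * g) = d + g * (k * a - v) := by ring_nf; linarith [huv]
  have hda : d ≤ a := Nat.le_of_dvd hapos (Nat.gcd_dvd_left a g)
  have hW : 0 ≤ k * a - v := by
    nlinarith [Int.natCast_pos.2 hapos, Int.natCast_pos.2 hgpos, hU]
  set A' := (u + k * g).toNat with hA'
  set C := (k * a - v).toNat with hC
  have hnat : a * A' = d + g * C := by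
    have h1 : (A' : ℤ) = u + k * g := Int.toNat_of_nonneg hU.le
    have h2 : (C : ℤ) = k * a - v := Int.toNat_of_nonneg hW
    have : (a : ℤ) * A' = (d : ℤ) + g * C := by rw [h1, h2]; exact hkey
    exact_mod_cast this
  refine ⟨C * (q + g), by simpa [smul_eq_mul] using S.nsmul_mem hqg C, ?_⟩
  have heq : C * (q + g) + d = C * q + a * A' := by rw [mul_add, hnat, mul_comm g C]; ring
  rw [heq]
  refine add_mem ?_ ?_
  · simpa [smul_eq_mul] using S.nsmul_mem hq C
  · simpa [smul_eq_mul, mul_comm] using S.nsmul_mem ha A'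



lemma gcd_mem6 (S : AddSubmonoid ℕ) (T : Finset ℕ) (hT : ∀ x ∈ T, x ∈ S) :
    ∃ q ∈ S, q + T.gcd id ∈ S := by
  classical
  induction T using Finset.induction with
  | empty => exact ⟨0, zero_mem _, by simpa using zero_mem S⟩
  | @insert a T ha ih =>
    obtain ⟨q, hq, hqg⟩ := ih (fun x hx => hT x (Finset.mem_insert_of_mem hx))
    have hgcd : (insert a T).gcd id = Nat.gcd a (T.gcd id) := by
      rw [Finset.gcd_insert]; rfl
    rw [hgcd]
    exact step6 S a (T.gcd id) q (hT a (Finset.mem_insert_self a T)) hq hqg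

lemma cofinite6 (S : AddSubmonoid ℕ) (q : ℕ) (hq : q ∈ S) (hq1 : q + 1 ∈ S) :
    ∀ k, q * q ≤ k → k ∈ S := by
  intro k hk
  rcases Nat.eq_zero_or_pos q with rfl | hqpos
  · simpa using S.nsmul_mem hq1 k
  set t := k / q with ht
  set r := k % q with hr
  have hdm : q * t + r = k := Nat.div_add_mod k q
  have hrq : r < q := Nat.mod_lt _ hqpos
  have hqt : q ≤ t := Nat.le_div_iff_mul_le hqpos |>.2 (by nlinarith)
  have hrt : r ≤ t := le_trans hrq.le hqt
  have hmem : (t - r) * q + r * (q + 1) ∈ S := by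
    refine add_mem ?_ ?_
    · simpa [smul_eq_mul, mul_comm] using S.nsmul_mem hq (t - r)
    · simpa [smul_eq_mul, mul_comm] using S.nsmul_mem hq1 r
  have hsub : (t - r) * q + r * q = t * q := by
    rw [← add_mul, Nat.sub_add_cancel hrt]
  have : (t - r) * q + r * (q + 1) = k := by
    have : q * t = t * q := mul_comm q t
    nlinarith [hsub, hdm]
  rwa [this] at hmem




lemma single6 {n : ℕ} (i : Fin n) (k : ℕ) : k • (Pi.single i 1 : Fin n → ℕ) = Pi.single i k := by
  funext l
  by_cases h : l = i <;> simp [Pi.single_apply, h, smul_eq_mul]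

lemma backward6 {n : ℕ} (A : Set (Fin n → ℕ))
    (h1 : ∀ i : Fin n, ∃ s : ℕ, 0 < s ∧ ∃ a : Fin s → ℕ,
          (∀ j, 0 < a j ∧ a j • Pi.single i 1 ∈ A) ∧ Finset.univ.gcd a = 1)
    (h2 : ∀ i j : Fin n, i ≠ j →
          ∃ m : ℕ, Pi.single i 1 + m • Pi.single j 1 ∈ A) :
    ((AddSubmonoid.closure A : Set (Fin n → ℕ))ᶜ).Finite := by
  classical
  have hc : ∀ i : Fin n, ∃ c : ℕ, ∀ k, c ≤ k →
      k • Pi.single i 1 ∈ AddSubmonoid.closure A := by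
    intro i
    obtain ⟨s, hs, a, ha, hgcd⟩ := h1 i
    set φ : ℕ →+ (Fin n → ℕ) :=
      { toFun := fun k => k • (Pi.single i 1 : Fin n → ℕ),
        map_zero' := zero_smul _ _,
        map_add' := fun x y => add_smul x y _ } with hφ
    set S : AddSubmonoid ℕ := (AddSubmonoid.closure A).comap φ with hS
    have hmemS : ∀ x ∈ Finset.univ.image a, x ∈ S := by
      intro x hx
      obtain ⟨j, _, rfl⟩ := Finset.mem_image.mp hx
      exact AddSubmonoid.subset_closure ((ha j).2)
    obtain ⟨q, hq, hq1⟩ := gcd_mem6 S (Finset.univ.image a) hmemS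
    have hT : (Finset.univ.image a).gcd id = 1 := by
      rw [Finset.gcd_image]; simpa using hgcd
    rw [hT] at hq1
    exact ⟨q * q, fun k hk => cofinite6 S q hq hq1 k hk⟩
  choose c hc using hc
  set c0 := Finset.univ.sup c with hc0def
  have hc0 : ∀ (i : Fin n) (k : ℕ), c0 ≤ k → k • Pi.single i 1 ∈ AddSubmonoid.closure A :=
    fun i k hk => hc i k (le_trans (Finset.le_sup (Finset.mem_univ i)) hk)
  have hm' : ∀ i j : Fin n, ∃ m : ℕ, i ≠ j → Pi.single i 1 + m • Pi.single j 1 ∈ A := by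
    intro i j
    by_cases h : i ≠ j
    · exact (h2 i j h).imp fun m hm _ => hm
    · exact ⟨0, fun h' => absurd h' h⟩
  choose m hm using hm'
  set M := Finset.univ.sup (fun p : Fin n × Fin n => m p.1 p.2) with hM
  set N := c0 + n * (c0 * M) with hN
  have hmain : ∀ x : Fin n → ℕ, ∀ i : Fin n, N ≤ x i → x ∈ AddSubmonoid.closure A := by
    intro x i hxi
    set T : Finset (Fin n) := Finset.univ.filter (fun j => j ≠ i ∧ 0 < x j ∧ x j < c0) with hTdef
    set cost := ∑ j ∈ T, x j * m j i with hcost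
    have hiT : i ∉ T := by simp [hTdef]
    have hcostle : cost ≤ n * (c0 * M) := by
      calc cost ≤ ∑ _j ∈ T, c0 * M := by
            refine Finset.sum_le_sum fun j hj => ?_
            have hj' := Finset.mem_filter.mp hj
            exact Nat.mul_le_mul hj'.2.2.2.le (Finset.le_sup (f := fun p : Fin n × Fin n => m p.1 p.2) (Finset.mem_univ (j, i)))
        _ = T.card * (c0 * M) := by rw [Finset.sum_const, smul_eq_mul]
        _ ≤ n * (c0 * M) := by
            refine Nat.mul_le_mul_right _ ?_
            simpa using Finset.card_le_univ T
    have hcx : cost + c0 ≤ x i := by omega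
    set z : Fin n → ℕ := fun l => if l ∈ T then 0 else if l = i then x i - cost else x l with hz
    have hsum2 : (∑ j ∈ T, x j • (Pi.single j 1 + m j i • Pi.single i 1))
        = (∑ j ∈ T, Pi.single j (x j)) + Pi.single i cost := by
      have : ∀ j ∈ T, x j • (Pi.single j 1 + m j i • Pi.single i 1)
          = (Pi.single j (x j) : Fin n → ℕ) + Pi.single i (x j * (m j i)) := by
        intro j _
        rw [smul_add, single6, smul_smul, single6]
      rw [Finset.sum_congr rfl this, Finset.sum_add_distrib]
      congr 1
      funext l
      by_cases hl : l = i
      · subst hl; simp [Finset.sum_apply, Pi.single_apply, hcost]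
      · simp [Finset.sum_apply, Pi.single_apply, hl]
    have hxeq : x = (∑ l, z l • Pi.single l 1)
        + ∑ j ∈ T, x j • (Pi.single j 1 + m j i • Pi.single i 1) := by
      rw [hsum2]
      have h1' : (∑ l, z l • Pi.single l (1:ℕ)) = z := by
        simp only [single6]; exact Finset.univ_sum_single z
      rw [h1']
      funext l
      simp only [Pi.add_apply, Finset.sum_apply, Pi.single_apply]
      rw [Finset.sum_ite_eq T l x]
      by_cases hlT : l ∈ T
      · have hli : l ≠ i := (Finset.mem_filter.mp hlT).2.1
        simp [hz, hlT, hli]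
      · by_cases hli : l = i
        · subst hli
          simp only [hz, hlT]
          simp [hlT]
          omega
        · simp [hz, hlT, hli]
    rw [hxeq]
    refine add_mem (AddSubmonoid.sum_mem _ ?_) (AddSubmonoid.sum_mem _ ?_)
    · intro l _
      by_cases hlT : l ∈ T
      · have hz0 : z l = 0 := by simp [hz, hlT]
        rw [hz0, zero_smul]; exact zero_mem _
      · by_cases hli : l = i
        · have hz0 : z l = x i - cost := by simp [hz, hlT, hli, hiT]
          rw [hz0, hli]
          exact hc0 i _ (by omega)
        · have hz0 : z l = x l := by simp [hz, hlT, hli]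
          rw [hz0]
          have hcase : ¬(0 < x l ∧ x l < c0) := fun hcon =>
            hlT (Finset.mem_filter.mpr ⟨Finset.mem_univ l, hli, hcon⟩)
          rcases Nat.eq_zero_or_pos (x l) with h0 | h0
          · rw [h0, zero_smul]; exact zero_mem _
          · exact hc0 l _ (by omega)
    · intro j hj
      have hji : j ≠ i := (Finset.mem_filter.mp hj).2.1
      exact (AddSubmonoid.closure A).nsmul_mem (AddSubmonoid.subset_closure (hm j i hji)) (x j)
  refine Set.Finite.subset (Set.Finite.pi (fun _ : Fin n => Set.finite_Iio N)) ?_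
  intro x hx
  rw [Set.mem_pi]
  intro i _
  by_contra hcon
  exact hx (hmain x i (le_of_not_gt hcon))



lemma forward6 {n : ℕ} (A : Set (Fin n → ℕ))
    (h : ((AddSubmonoid.closure A : Set (Fin n → ℕ))ᶜ).Finite) :
    ((∀ i : Fin n, ∃ s : ℕ, 0 < s ∧ ∃ a : Fin s → ℕ,
          (∀ j, 0 < a j ∧ a j • Pi.single i 1 ∈ A) ∧ Finset.univ.gcd a = 1) ∧
       (∀ i j : Fin n, i ≠ j →
          ∃ m : ℕ, Pi.single i 1 + m • Pi.single j 1 ∈ A)) := by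
  classical
  constructor
  · intro i
    -- all large multiples of e_i are in the closure
    have hfin : {k : ℕ | (Pi.single i k : Fin n → ℕ) ∉ AddSubmonoid.closure A}.Finite := by
      have := h.preimage ((Pi.single_injective (M := fun _ : Fin n => ℕ) i).injOn)
      exact this
    obtain ⟨b, hb⟩ := hfin.bddAbove
    have hgood : ∀ k, b + 1 ≤ k → (Pi.single i k : Fin n → ℕ) ∈ AddSubmonoid.closure A := by
      intro k hk
      by_contra hcon
      exact absurd (hb hcon) (by omega)
    obtain ⟨m1, hm1A, hm1s⟩ := AddSubmonoid.exists_multiset_of_mem_closure (hgood (b+1) le_rfl)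
    obtain ⟨m2, hm2A, hm2s⟩ := AddSubmonoid.exists_multiset_of_mem_closure (hgood (b+2) (by omega))
    -- support claim
    have hsupp : ∀ y ∈ m1 + m2, y = Pi.single i (y i) := by
      intro y hy
      have hle : y ≤ (m1 + m2).sum := Multiset.single_le_sum (fun x _ => zero_le) y hy
      have hsum : (m1 + m2).sum = Pi.single i (b+1) + Pi.single i (b+2) := by
        rw [Multiset.sum_add, hm1s, hm2s]
      funext l
      by_cases hl : l = i
      · subst hl; simp
      · have := hle l
        rw [hsum] at this
        simp only [Pi.add_apply, Pi.single_apply, if_neg hl] at this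
        simp [Pi.single_apply, hl]
        omega
    set mm := (m1 + m2).filter (fun y => y i ≠ 0) with hmm
    set L := mm.toList with hL
    have hLmem : ∀ y ∈ L, y ∈ mm := fun y hy => (Multiset.mem_toList).mp hy
    have hspos : 0 < L.length := by
      rcases Nat.eq_zero_or_pos L.length with h0 | h0
      · exfalso
        have hmm0 : mm = 0 := by
          have := Multiset.length_toList mm
          rw [← hL] at this
          exact Multiset.card_eq_zero.mp (by omega)
        have hzero : ∀ y ∈ m1 + m2, y i = 0 := by
          intro y hy
          by_contra hcon
          have : y ∈ mm := Multiset.mem_filter.mpr ⟨hy, hcon⟩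
          rw [hmm0] at this
          exact absurd this (Multiset.notMem_zero y)
        have : ((m1 + m2).sum) i = 0 := by
          have hmap := map_multiset_sum (Pi.evalAddMonoidHom (fun _ : Fin n => ℕ) i) (m1 + m2)
          have : ((m1+m2).map (fun y => y i)).sum = 0 :=
            Multiset.sum_eq_zero (by
              intro x hx
              obtain ⟨y, hy, rfl⟩ := Multiset.mem_map.mp hx
              exact hzero y hy)
          simpa [Pi.evalAddMonoidHom] using hmap.trans this
        rw [Multiset.sum_add, hm1s, hm2s] at this
        simp at this
      · exact h0
    refine ⟨L.length, hspos, fun j => (L.get j) i, fun j => ⟨?_, ?_⟩, ?_⟩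
    · have hmem := hLmem _ (L.get_mem j)
      exact Nat.pos_of_ne_zero (Multiset.mem_filter.mp hmem).2
    · have hmem := hLmem _ (L.get_mem j)
      have hin : L.get j ∈ m1 + m2 := (Multiset.mem_filter.mp hmem).1
      have hA : L.get j ∈ A := by
        rcases Multiset.mem_add.mp hin with h' | h'
        · exact hm1A _ h'
        · exact hm2A _ h'
      rw [single6]
      rw [← hsupp _ hin]
      exact hA
    · set a : Fin L.length → ℕ := fun j => (L.get j) i with ha
      set g := Finset.univ.gcd a with hg
      have hdvd : ∀ y ∈ m1 + m2, g ∣ y i := by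
        intro y hy
        by_cases h0 : y i = 0
        · simp [h0]
        · have hymm : y ∈ mm := Multiset.mem_filter.mpr ⟨hy, h0⟩
          have hyL : y ∈ L := Multiset.mem_toList.mpr hymm
          obtain ⟨j, hj⟩ := List.mem_iff_get.mp hyL
          rw [← hj]
          exact Finset.gcd_dvd (Finset.mem_univ j)
      have hd1 : g ∣ b + 1 := by
        have hmap := map_multiset_sum (Pi.evalAddMonoidHom (fun _ : Fin n => ℕ) i) m1
        have : g ∣ (m1.map (fun y => y i)).sum := Multiset.dvd_sum (by
          intro x hx
          obtain ⟨y, hy, rfl⟩ := Multiset.mem_map.mp hx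
          exact hdvd y (Multiset.mem_add.mpr (Or.inl hy)))
        have hsum1 : (m1.map (fun y => y i)).sum = b + 1 := by
          have h2 := hmap.symm.trans (congrArg (fun f => f i) hm1s)
          simpa [Pi.evalAddMonoidHom] using h2
        rwa [hsum1] at this
      have hd2 : g ∣ b + 2 := by
        have hmap := map_multiset_sum (Pi.evalAddMonoidHom (fun _ : Fin n => ℕ) i) m2
        have : g ∣ (m2.map (fun y => y i)).sum := Multiset.dvd_sum (by
          intro x hx
          obtain ⟨y, hy, rfl⟩ := Multiset.mem_map.mp hx
          exact hdvd y (Multiset.mem_add.mpr (Or.inr hy)))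
        have hsum2 : (m2.map (fun y => y i)).sum = b + 2 := by
          have h2 := hmap.symm.trans (congrArg (fun f => f i) hm2s)
          simpa [Pi.evalAddMonoidHom] using h2
        rwa [hsum2] at this
      have : g ∣ 1 := by
        have := Nat.dvd_sub hd2 hd1
        simpa using this
      exact Nat.dvd_one.mp this
  · intro i j hij
    have hfin : {k : ℕ | (Pi.single i 1 + Pi.single j k : Fin n → ℕ) ∉ AddSubmonoid.closure A}.Finite := by
      have hinj : Function.Injective (fun k : ℕ => (Pi.single i 1 + Pi.single j k : Fin n → ℕ)) := by
        intro a b hab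
        have := congrFun hab j
        simpa [Pi.single_apply, (Ne.symm hij)] using this
      exact h.preimage hinj.injOn
    obtain ⟨b, hb⟩ := hfin.bddAbove
    have hgood : (Pi.single i 1 + Pi.single j (b+1) : Fin n → ℕ) ∈ AddSubmonoid.closure A := by
      by_contra hcon
      exact absurd (hb hcon) (by omega)
    obtain ⟨ms, hmsA, hmss⟩ := AddSubmonoid.exists_multiset_of_mem_closure hgood
    have hey : ∃ y ∈ ms, y i ≠ 0 := by
      by_contra hcon
      push_neg at hcon
      have : (ms.sum) i = 0 := by
        have hmap := map_multiset_sum (Pi.evalAddMonoidHom (fun _ : Fin n => ℕ) i) ms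
        have : (ms.map (fun y => y i)).sum = 0 := Multiset.sum_eq_zero (by
          intro x hx
          obtain ⟨y, hy, rfl⟩ := Multiset.mem_map.mp hx
          exact hcon y hy)
        simpa [Pi.evalAddMonoidHom] using hmap.trans this
      rw [hmss] at this
      simp [Pi.single_apply, Ne.symm hij] at this
    obtain ⟨y, hy, hyi⟩ := hey
    have hle : y ≤ ms.sum := Multiset.single_le_sum (fun x _ => zero_le) y hy
    have hyeq : y = Pi.single i 1 + (y j) • Pi.single j 1 := by
      rw [single6]
      funext l
      have hll := hle l
      rw [hmss] at hll
      simp only [Pi.add_apply, Pi.single_apply] at hll ⊢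
      by_cases hli : l = i
      · subst hli
        have hlj : ¬ l = j := hij
        rw [if_pos rfl, if_neg hlj] at hll ⊢
        have hyi' := hyi
        omega
      · by_cases hlj : l = j
        · subst hlj
          rw [if_neg hli, if_pos rfl] at hll ⊢
          omega
        · rw [if_neg hli, if_neg hlj] at hll ⊢
          omega
    exact ⟨y j, by rw [← hyeq]; exact hmsA y hy⟩


/-- Characterization of submonoids `⟨A⟩ ⊆ ℕ^n` with finite complement:
(1) for every `i` there are finitely many positive multiples `a_j e_i ∈ A` with
`gcd` of the `a_j` equal to `1`; (2) for all `i ≠ j` there is `m ∈ ℕ` with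
`e_i + m e_j ∈ A`. -/
theorem stmt6 {n : ℕ} (A : Set (Fin n → ℕ)) :
    ((AddSubmonoid.closure A : Set (Fin n → ℕ))ᶜ).Finite ↔
      ((∀ i : Fin n, ∃ s : ℕ, 0 < s ∧ ∃ a : Fin s → ℕ,
          (∀ j, 0 < a j ∧ a j • Pi.single i 1 ∈ A) ∧ Finset.univ.gcd a = 1) ∧
       (∀ i j : Fin n, i ≠ j →
          ∃ m : ℕ, Pi.single i 1 + m • Pi.single j 1 ∈ A)) := by
  constructor
  · exact forward6 A
  · exact fun ⟨h1, h2⟩ => backward6 A h1 h2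
end

section
/- Let C ⊆ ℕ^d be the additive submonoid generated by g_1, …, g_n with g_i ≠ 0 for every i, and let S ⊆ C be a submonoid. Then C \ S is finite if and only if both of the following hold: (1) for every i ∈ {1,…,n}, the set S_i = {λ ∈ ℕ : λ·g_i ∈ S} is a numerical semigroup (i.e., a submonoid of ℕ with finite complement in ℕ); (2) for all i, j ∈ {1,…,n} with i ≠ j there exists n_i^{(j)} ∈ ℕ such that g_i + n_i^{(j)}·g_j ∈ S. -/
open Finset

private lemma mem_clos7 {d n : ℕ} (g : Fin n → (Fin d → ℕ)) (x : Fin d → ℕ) :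
    x ∈ AddSubmonoid.closure (Set.range g) ↔ ∃ a : Fin n → ℕ, x = ∑ j, a j • g j := by
  constructor
  · intro hx
    induction hx using AddSubmonoid.closure_induction with
    | mem y hy =>
      obtain ⟨i, rfl⟩ := hy
      exact ⟨fun j => if j = i then 1 else 0, by simp⟩
    | zero => exact ⟨0, by simp⟩
    | add y z _ _ hy hz =>
      obtain ⟨a, rfl⟩ := hy; obtain ⟨b, rfl⟩ := hz
      exact ⟨a + b, by simp [add_smul, Finset.sum_add_distrib]⟩
  · rintro ⟨a, rfl⟩
    exact AddSubmonoid.sum_mem _ fun j _ =>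
      AddSubmonoid.nsmul_mem _ (AddSubmonoid.subset_closure (Set.mem_range_self j)) _

/-- Let `C = ⟨g_1, …, g_n⟩ ⊆ ℕ^d` with all `g_i ≠ 0` and `S ⊆ C` a submonoid.
Then `C \ S` is finite iff (1) each `S_i = {λ : λ·g_i ∈ S}` is a numerical
semigroup (a submonoid of `ℕ` with finite complement), and (2) for all `i ≠ j`
there is `m ∈ ℕ` with `g_i + m·g_j ∈ S`. -/
theorem stmt7 {d n : ℕ} (g : Fin n → (Fin d → ℕ)) (hg : ∀ i, g i ≠ 0)
    (C S : AddSubmonoid (Fin d → ℕ))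
    (hC : C = AddSubmonoid.closure (Set.range g)) (hSC : S ≤ C) :
    ((C : Set (Fin d → ℕ)) \ (S : Set (Fin d → ℕ))).Finite ↔
      ((∀ i : Fin n, ∃ T : AddSubmonoid ℕ,
          (T : Set ℕ) = {l : ℕ | l • g i ∈ S} ∧ ((T : Set ℕ)ᶜ).Finite) ∧
       (∀ i j : Fin n, i ≠ j → ∃ m : ℕ, g i + m • g j ∈ S)) := by
  have hkey : ∀ i : Fin n, ∃ k, g i k ≠ 0 := by
    intro i
    by_contra h
    push_neg at h
    exact hg i (funext fun k => h k)
  constructor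
  · intro hfin
    constructor
    · intro i
      obtain ⟨k, hk⟩ := hkey i
      have hinj : Function.Injective (fun l : ℕ => l • g i) := by
        intro a b hab
        have := congrFun hab k
        simp only [Pi.smul_apply, smul_eq_mul] at this
        exact Nat.eq_of_mul_eq_mul_right (Nat.pos_of_ne_zero hk) this
      refine ⟨{ carrier := {l : ℕ | l • g i ∈ S},
                zero_mem' := by
                  show (0:ℕ) • g i ∈ S
                  rw [zero_smul]; exact S.zero_mem,
                add_mem' := fun {a b} ha hb => by
                  simp only [Set.mem_setOf_eq] at *
                  rw [add_smul]; exact S.add_mem ha hb }, rfl, ?_⟩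
      have hsub : ({l : ℕ | l • g i ∈ S})ᶜ ⊆
          (fun l : ℕ => l • g i) ⁻¹' ((C : Set (Fin d → ℕ)) \ S) := by
        intro l hl
        refine ⟨?_, hl⟩
        rw [hC]
        exact AddSubmonoid.nsmul_mem _ (AddSubmonoid.subset_closure (Set.mem_range_self i)) _
      exact (hfin.preimage hinj.injOn).subset hsub
    · intro i j hij
      by_contra h
      push_neg at h
      obtain ⟨k, hk⟩ := hkey j
      have hinj : Function.Injective (fun m : ℕ => g i + m • g j) := by
        intro a b hab
        have := congrFun hab k
        simp only [Pi.add_apply, Pi.smul_apply, smul_eq_mul] at this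
        have : a * g j k = b * g j k := by omega
        exact Nat.eq_of_mul_eq_mul_right (Nat.pos_of_ne_zero hk) this
      have hsub : Set.range (fun m : ℕ => g i + m • g j) ⊆
          (C : Set (Fin d → ℕ)) \ S := by
        rintro x ⟨m, rfl⟩
        refine ⟨?_, h m⟩
        rw [hC]
        exact AddSubmonoid.add_mem _
          (AddSubmonoid.subset_closure (Set.mem_range_self i))
          (AddSubmonoid.nsmul_mem _ (AddSubmonoid.subset_closure (Set.mem_range_self j)) _)
      exact (Set.infinite_range_of_injective hinj) (hfin.subset hsub)
  · rintro ⟨h1, h2⟩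
    -- get thresholds N i
    have hN : ∀ i : Fin n, ∃ N : ℕ, ∀ l, N ≤ l → l • g i ∈ S := by
      intro i
      obtain ⟨T, hT, hTf⟩ := h1 i
      obtain ⟨b, hb⟩ := hTf.bddAbove
      refine ⟨b + 1, fun l hl => ?_⟩
      have hlT : l ∈ (T : Set ℕ) := by
        by_contra hc
        exact absurd (hb hc) (by omega)
      rw [hT] at hlT
      exact hlT
    choose N hNs using hN
    have hm' : ∀ i j : Fin n, ∃ mm : ℕ, i ≠ j → g i + mm • g j ∈ S := by
      intro i j
      by_cases hij : i = j
      · exact ⟨0, fun h => absurd hij h⟩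
      · obtain ⟨mm, hmm⟩ := h2 i j hij
        exact ⟨mm, fun _ => hmm⟩
    choose m hm using hm'
    set Btot : ℕ := ∑ j : Fin n, ∑ i : Fin n, N j * m j i with hBtot
    set K : ℕ := Btot + (∑ j : Fin n, N j) + 1 with hK
    -- key: if some coefficient is ≥ K, the element is in S
    have key : ∀ (a : Fin n → ℕ) (i : Fin n), K ≤ a i → (∑ j, a j • g j) ∈ S := by
      intro a i hai
      set F : Finset (Fin n) := univ.filter (fun j => j ≠ i ∧ a j < N j) with hF
      set E : ℕ := ∑ j ∈ F, a j * m j i with hE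
      have hFsub : F ⊆ univ.erase i := by
        intro j hj
        simp only [hF, mem_filter] at hj
        exact Finset.mem_erase.mpr ⟨hj.2.1, mem_univ j⟩
      have hEB : E ≤ Btot := by
        calc E ≤ ∑ j ∈ F, N j * m j i := by
                apply Finset.sum_le_sum
                intro j hj
                simp only [hF, mem_filter] at hj
                exact Nat.mul_le_mul_right _ (le_of_lt hj.2.2)
          _ ≤ ∑ j : Fin n, N j * m j i := by
                apply Finset.sum_le_sum_of_subset (Finset.subset_univ F)
          _ ≤ Btot := by
                apply Finset.sum_le_sum
                intro j _
                exact Finset.single_le_sum (f := fun i' => N j * m j i') (fun i' _ => Nat.zero_le _) (mem_univ i)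
      have hNi : N i ≤ ∑ j : Fin n, N j :=
        Finset.single_le_sum (fun j _ => Nat.zero_le _) (mem_univ i)
      have hEa : E + N i ≤ a i := by omega
      have hmid : ∑ j ∈ F, a j • (g j + m j i • g i) =
          (∑ j ∈ F, a j • g j) + E • g i := by
        rw [hE, Finset.sum_smul]
        rw [← Finset.sum_add_distrib]
        apply Finset.sum_congr rfl
        intro j _
        rw [smul_add, smul_smul]
      have hdecomp : (∑ j, a j • g j) =
          (a i - E) • g i + (∑ j ∈ F, a j • (g j + m j i • g i)) +
            ∑ j ∈ univ.erase i \ F, a j • g j := by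
        rw [hmid]
        have h1' : ∑ j, a j • g j = a i • g i + ∑ j ∈ univ.erase i, a j • g j :=
          (Finset.add_sum_erase _ _ (mem_univ i)).symm
        have h2' : ∑ j ∈ univ.erase i, a j • g j =
            ∑ j ∈ univ.erase i \ F, a j • g j + ∑ j ∈ F, a j • g j :=
          (Finset.sum_sdiff hFsub).symm
        have h3' : a i • g i = (a i - E) • g i + E • g i := by
          rw [← add_smul, Nat.sub_add_cancel (by omega)]
        rw [h1', h2', h3']
        abel
      rw [hdecomp]
      refine S.add_mem (S.add_mem ?_ ?_) ?_
      · exact hNs i _ (by omega)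
      · refine AddSubmonoid.sum_mem _ fun j hj => ?_
        simp only [hF, mem_filter] at hj
        exact AddSubmonoid.nsmul_mem _ (hm j i hj.2.1) _
      · refine AddSubmonoid.sum_mem _ fun j hj => ?_
        rw [Finset.mem_sdiff, Finset.mem_erase] at hj
        have hjF : ¬(j ≠ i ∧ a j < N j) := by
          intro hc
          exact hj.2 (by simp [hF, hc])
        have : N j ≤ a j := by
          push_neg at hjF
          exact hjF hj.1.1
        exact hNs j _ this
    -- conclude
    have hsub : (C : Set (Fin d → ℕ)) \ S ⊆ Set.Iic (∑ j, K • g j) := by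
      intro x hx
      obtain ⟨a, rfl⟩ := (mem_clos7 g x).mp (hC ▸ hx.1)
      intro k
      simp only [Finset.sum_apply, Pi.smul_apply, smul_eq_mul]
      apply Finset.sum_le_sum
      intro j _
      apply Nat.mul_le_mul_right
      by_contra hc
      exact hx.2 (key a j (by omega))
    exact (Set.finite_Iic _).subset hsub
end

section
/- Let C ⊆ ℕ^d be the additive submonoid generated by g_1, …, g_r, g_{r+1}, …, g_{r+m}, all nonzero, such that cone({g_1,…,g_{r+m}}) = cone({g_1,…,g_r}). Fix i ∈ {1,…,r} such that g_i ∉ cone({g_1,…,g_r} \ {g_i}) and such that the greatest common divisor of the coordinates of g_i equals 1. Let S ⊆ C be a submonoid and let A = (S \ {0}) \ ((S \ {0}) + (S \ {0})) be the minimal generating set of S. Let S_i = {λ ∈ ℕ : λ·g_i ∈ S}. Then for every minimal generator λ of the monoid S_i, i.e., every λ ∈ (S_i \ {0}) \ ((S_i \ {0}) + (S_i \ {0})), one has λ·g_i ∈ A. -/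
open Pointwise

private lemma rep_closure {d n : ℕ} (g : Fin n → (Fin d → ℕ)) {x : Fin d → ℕ}
    (hx : x ∈ AddSubmonoid.closure (Set.range g)) :
    ∃ c : Fin n → ℕ, x = ∑ j, c j • g j := by
  induction hx using AddSubmonoid.closure_induction with
  | mem y hy =>
    obtain ⟨j, rfl⟩ := hy
    exact ⟨fun t => if t = j then 1 else 0, by simp [ite_smul]⟩
  | zero => exact ⟨0, by simp⟩
  | add u v _ _ ihu ihv =>
    obtain ⟨c1, rfl⟩ := ihu
    obtain ⟨c2, rfl⟩ := ihv
    exact ⟨c1 + c2, by simp [add_smul, Finset.sum_add_distrib]⟩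

private lemma mult_of_rat_smul {d : ℕ} {v w : Fin d → ℕ}
    (hgcd : Finset.univ.gcd w = 1) {q : ℚ} (hq : 0 ≤ q)
    (h : ∀ k, (v k : ℚ) = q * w k) : ∃ m : ℕ, ∀ k, v k = m * w k := by
  have hnum : 0 ≤ q.num := Rat.num_nonneg.mpr hq
  have htn : (q.num.toNat : ℚ) = (q.num : ℚ) := by exact_mod_cast Int.toNat_of_nonneg hnum
  have key : ∀ k, v k * q.den = q.num.toNat * w k := by
    intro k
    have h1 : ((v k : ℚ)) * q.den = (q.num : ℚ) * w k := by
      rw [h k, mul_comm q ((w k : ℚ)), mul_assoc, Rat.mul_den_eq_num, mul_comm]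
    rw [← htn] at h1
    exact_mod_cast h1
  have hcop : Nat.Coprime q.den q.num.toNat := by
    have := q.reduced
    have h2 : q.num.toNat = q.num.natAbs := by omega
    rw [h2]; exact this.symm
  have hdvd : ∀ k, q.den ∣ w k := by
    intro k
    exact hcop.dvd_of_dvd_mul_left ⟨v k, by rw [← key k]; ring⟩
  have hden1 : q.den = 1 := by
    have : q.den ∣ Finset.univ.gcd w := Finset.dvd_gcd fun k _ => hdvd k
    rw [hgcd] at this
    exact Nat.eq_one_of_dvd_one this
  exact ⟨q.num.toNat, fun k => by have := key k; rw [hden1] at this; omega⟩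

/-- Let `C = ⟨g_1, …, g_n⟩ ⊆ ℕ^d` with all generators nonzero, the first `r` of
which span the cone of all of them.  Fix `i < r` with `g_i` an extreme ray
(not in the cone of the other `g_t`, `t < r`) whose coordinates have gcd `1`.
If `S ⊆ C` is a submonoid with minimal generating set
`A = (S \ {0}) \ ((S \ {0}) + (S \ {0}))` and `S_i = {λ : λ·g_i ∈ S}`, then every
minimal generator `λ` of `S_i` satisfies `λ·g_i ∈ A`. -/
theorem stmt9 {d n : ℕ} (r : ℕ) (hr : r ≤ n) (g : Fin n → (Fin d → ℕ))
    (hg : ∀ j, g j ≠ 0)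
    (hcone : ∀ j : Fin n, ∃ q : Fin n → ℚ, (∀ t, 0 ≤ q t) ∧
        (∀ t : Fin n, ¬ (t.val < r) → q t = 0) ∧
        (fun k => (g j k : ℚ)) = ∑ t, q t • fun k => (g t k : ℚ))
    (i : Fin n) (hi : i.val < r)
    (hext : ¬ ∃ q : Fin n → ℚ, (∀ t, 0 ≤ q t) ∧
        (∀ t : Fin n, ¬ (t.val < r) → q t = 0) ∧ q i = 0 ∧
        (fun k => (g i k : ℚ)) = ∑ t, q t • fun k => (g t k : ℚ))
    (hgcd : Finset.univ.gcd (g i) = 1)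
    (C S : AddSubmonoid (Fin d → ℕ))
    (hC : C = AddSubmonoid.closure (Set.range g)) (hSC : S ≤ C)
    (A : Set (Fin d → ℕ))
    (hA : A = ((S : Set (Fin d → ℕ)) \ {0}) \
        ((((S : Set (Fin d → ℕ)) \ {0})) + (((S : Set (Fin d → ℕ)) \ {0}))))
    (Si : Set ℕ) (hSi : Si = {l : ℕ | l • g i ∈ S})
    (l : ℕ) (hl : l ∈ (Si \ {0}) \ ((Si \ {0}) + (Si \ {0}))) :
    l • g i ∈ A := by
  subst hC hA hSi
  obtain ⟨⟨hlS, hl0⟩, hlns⟩ := hl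
  have hl0' : l ≠ 0 := hl0
  have hlS' : l • g i ∈ S := hlS
  obtain ⟨k0, hk0⟩ := Function.ne_iff.mp (hg i)
  have hk0pos : 0 < g i k0 := Nat.pos_of_ne_zero hk0
  refine ⟨⟨hlS', ?_⟩, ?_⟩
  · -- l • g i ≠ 0
    intro h
    have h0 : l • g i = 0 := h
    have := congrFun h0 k0
    simp only [Pi.smul_apply, smul_eq_mul, Pi.zero_apply, Nat.mul_eq_zero] at this
    rcases this with h | h
    · exact hl0' h
    · exact hk0 h
  · -- not a sum of two nonzero elements of S
    intro hmem
    obtain ⟨x, hx, y, hy, hxy⟩ := hmem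
    obtain ⟨hxS, hx0⟩ := hx
    obtain ⟨hyS, hy0⟩ := hy
    have hx0' : x ≠ 0 := hx0
    have hy0' : y ≠ 0 := hy0
    choose q hq0 hqr hq3 using hcone
    have hqk : ∀ j k, (g j k : ℚ) = ∑ t, q j t * (g t k : ℚ) := by
      intro j k
      have := congrFun (hq3 j) k
      simpa [Finset.sum_apply] using this
    obtain ⟨a, ha⟩ := rep_closure g (hSC hxS)
    obtain ⟨b, hb⟩ := rep_closure g (hSC hyS)
    have hxk : ∀ k, x k = ∑ j, a j * g j k := by
      intro k; rw [ha]; simp [Finset.sum_apply]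
    have hyk : ∀ k, y k = ∑ j, b j * g j k := by
      intro k; rw [hb]; simp [Finset.sum_apply]
    have hsum : ∀ k, ((l : ℚ)) * g i k = ∑ j, ((a j + b j : ℕ) : ℚ) * g j k := by
      intro k
      have h1 : x k + y k = l * g i k := by
        have := congrFun hxy k
        simpa [Pi.add_apply] using this
      have h2 : (∑ j, (a j + b j) * g j k : ℕ) = l * g i k := by
        rw [← h1, hxk, hyk, ← Finset.sum_add_distrib]
        exact Finset.sum_congr rfl fun j _ => by ring
      exact_mod_cast h2.symm
    set Q : Fin n → ℚ := fun t => ∑ j, ((a j + b j : ℕ) : ℚ) * q j t with hQdef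
    have hQ0 : ∀ t, 0 ≤ Q t :=
      fun t => Finset.sum_nonneg fun j _ => mul_nonneg (by positivity) (hq0 j t)
    have hQr : ∀ t : Fin n, ¬ (t.val < r) → Q t = 0 := by
      intro t ht
      exact Finset.sum_eq_zero fun j _ => by rw [hqr j t ht, mul_zero]
    have hmain : ∀ k, (l : ℚ) * g i k = ∑ t, Q t * g t k := by
      intro k
      rw [hsum k]
      rw [show (∑ j, ((a j + b j : ℕ) : ℚ) * g j k)
          = ∑ j, ∑ t, ((a j + b j : ℕ) : ℚ) * (q j t * g t k) from
        Finset.sum_congr rfl fun j _ => by rw [hqk j k, Finset.mul_sum]]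
      rw [Finset.sum_comm]
      exact Finset.sum_congr rfl fun t _ => by
        rw [hQdef, Finset.sum_mul]
        exact Finset.sum_congr rfl fun j _ => by ring
    have hsplit : ∀ k, ((l : ℚ) - Q i) * g i k = ∑ t ∈ Finset.univ.erase i, Q t * g t k := by
      intro k
      have h1 := hmain k
      rw [← Finset.add_sum_erase _ _ (Finset.mem_univ i)] at h1
      linarith
    have hcase : (l : ℚ) - Q i = 0 := by
      rcases lt_trichotomy ((l : ℚ) - Q i) 0 with hcas | hcas | hcas
      · exfalso
        have h1 := hsplit k0
        have hpos : (0 : ℚ) < g i k0 := by exact_mod_cast hk0pos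
        have hR : 0 ≤ ∑ t ∈ Finset.univ.erase i, Q t * g t k0 :=
          Finset.sum_nonneg fun t _ => mul_nonneg (hQ0 t) (by positivity)
        nlinarith
      · exact hcas
      · exfalso
        apply hext
        refine ⟨fun t => if t = i then 0 else Q t / ((l : ℚ) - Q i), ?_, ?_, ?_, ?_⟩
        · intro t
          dsimp only
          split
          · exact le_refl 0
          · exact div_nonneg (hQ0 t) hcas.le
        · intro t ht
          dsimp only
          split
          · rfl
          · rw [hQr t ht, zero_div]
        · simp
        · funext k
          rw [Finset.sum_apply]
          simp only [Pi.smul_apply, smul_eq_mul]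
          rw [← Finset.add_sum_erase _ _ (Finset.mem_univ i)]
          rw [if_pos rfl, zero_mul, zero_add]
          have h2 : ∑ t ∈ Finset.univ.erase i,
              (if t = i then 0 else Q t / ((l : ℚ) - Q i)) * g t k
              = ((l : ℚ) - Q i)⁻¹ * ∑ t ∈ Finset.univ.erase i, Q t * g t k := by
            rw [Finset.mul_sum]
            refine Finset.sum_congr rfl fun t ht => ?_
            rw [if_neg (Finset.mem_erase.mp ht).1]
            ring
          rw [h2, ← hsplit k]
          field_simp
    -- main branch: Q i = l, all other Q t = 0
    have hQz : ∀ t, t ≠ i → Q t = 0 := by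
      intro t hti
      by_contra hQt
      obtain ⟨k, hk⟩ := Function.ne_iff.mp (hg t)
      have h1 := hsplit k
      rw [hcase, zero_mul] at h1
      have hterm := (Finset.sum_eq_zero_iff_of_nonneg
        (fun t' _ => mul_nonneg (hQ0 t') (by positivity))).mp h1.symm t
        (Finset.mem_erase.mpr ⟨hti, Finset.mem_univ t⟩)
      rcases mul_eq_zero.mp hterm with h | h
      · exact hQt h
      · exact hk (by exact_mod_cast h)
    have hq_zero : ∀ j, a j + b j ≠ 0 → ∀ t, t ≠ i → q j t = 0 := by
      intro j hj t hti
      have hQt := hQz t hti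
      have hterm := (Finset.sum_eq_zero_iff_of_nonneg
        (fun j' _ => mul_nonneg (by positivity) (hq0 j' t))).mp hQt j (Finset.mem_univ j)
      rcases mul_eq_zero.mp hterm with h | h
      · exact absurd (by exact_mod_cast h : a j + b j = 0) hj
      · exact h
    have hmult : ∀ j, ∃ m : ℕ, a j + b j ≠ 0 → ∀ k, g j k = m * g i k := by
      intro j
      by_cases hj : a j + b j = 0
      · exact ⟨0, fun h => absurd hj h⟩
      · have hjk : ∀ k, (g j k : ℚ) = q j i * g i k := by
          intro k
          rw [hqk j k, ← Finset.add_sum_erase _ _ (Finset.mem_univ i)]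
          rw [Finset.sum_eq_zero fun t ht =>
            by rw [hq_zero j hj t (Finset.mem_erase.mp ht).1, zero_mul], add_zero]
        obtain ⟨m, hm⟩ := mult_of_rat_smul hgcd (hq0 j i) hjk
        exact ⟨m, fun _ => hm⟩
    choose M hM using hmult
    have hx_mult : ∀ k, x k = (∑ j, a j * M j) * g i k := by
      intro k
      rw [hxk k, Finset.sum_mul]
      refine Finset.sum_congr rfl fun j _ => ?_
      by_cases hj : a j = 0
      · simp [hj]
      · have hcj : a j + b j ≠ 0 := by omega
        rw [hM j hcj k]; ring
    have hy_mult : ∀ k, y k = (∑ j, b j * M j) * g i k := by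
      intro k
      rw [hyk k, Finset.sum_mul]
      refine Finset.sum_congr rfl fun j _ => ?_
      by_cases hj : b j = 0
      · simp [hj]
      · have hcj : a j + b j ≠ 0 := by omega
        rw [hM j hcj k]; ring
    set mx := ∑ j, a j * M j with hmx
    set my := ∑ j, b j * M j with hmy
    have hxeq : x = mx • g i := funext fun k => by rw [hx_mult k]; rfl
    have hyeq : y = my • g i := funext fun k => by rw [hy_mult k]; rfl
    have hmx0 : mx ≠ 0 := by
      intro h
      apply hx0'
      rw [hxeq, h, zero_smul]
    have hmy0 : my ≠ 0 := by
      intro h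
      apply hy0'
      rw [hyeq, h, zero_smul]
    have hsum_l : mx + my = l := by
      have h1 : (mx + my) * g i k0 = l * g i k0 := by
        have := congrFun hxy k0
        simp only [Pi.add_apply, Pi.smul_apply, smul_eq_mul] at this
        rw [hx_mult k0, hy_mult k0] at this
        linarith
      exact Nat.eq_of_mul_eq_mul_right hk0pos h1
    apply hlns
    refine ⟨mx, ⟨?_, hmx0⟩, my, ⟨?_, hmy0⟩, hsum_l⟩
    · show mx • g i ∈ S
      rw [← hxeq]; exact hxS
    · show my • g i ∈ S
      rw [← hyeq]; exact hyS
end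

section
/- Let S ⊆ ℕ^d be the additive submonoid generated by g_1, …, g_n with g_i ≠ 0 for every i, and let I be an ideal of S, i.e., I ⊆ S and I + S ⊆ I. Then S \ I is a finite set if and only if for every i ∈ {1,…,n} there exists k_i ∈ ℕ \ {0} such that k_i·g_i ∈ I. -/
open Pointwise

lemma mem_closure_range_iff_sum {d n : ℕ} (g : Fin n → (Fin d → ℕ)) (x : Fin d → ℕ) :
    x ∈ AddSubmonoid.closure (Set.range g) ↔ ∃ c : Fin n → ℕ, x = ∑ i, c i • g i := by
  constructor
  · intro hx
    induction hx using AddSubmonoid.closure_induction with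
    | mem y hy =>
      obtain ⟨i, rfl⟩ := hy
      exact ⟨Pi.single i 1, by simp [Pi.single_apply, Finset.sum_ite_eq']⟩
    | zero => exact ⟨0, by simp⟩
    | add a b _ _ ha hb =>
      obtain ⟨c₁, rfl⟩ := ha
      obtain ⟨c₂, rfl⟩ := hb
      exact ⟨c₁ + c₂, by simp [add_smul, Finset.sum_add_distrib]⟩
  · rintro ⟨c, rfl⟩
    exact AddSubmonoid.sum_mem _ (fun i _ =>
      AddSubmonoid.nsmul_mem _ (AddSubmonoid.subset_closure (Set.mem_range_self i)) _)

/-- Let `S = ⟨g_1, …, g_n⟩ ⊆ ℕ^d` with all `g_i ≠ 0` and let `I` be an ideal of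
`S` (`I ⊆ S`, `I + S ⊆ I`). Then `S \ I` is finite iff for every `i` there is
`k_i ≠ 0` with `k_i·g_i ∈ I`. -/
theorem stmt10 {d n : ℕ} (g : Fin n → (Fin d → ℕ)) (hg : ∀ i, g i ≠ 0)
    (S : AddSubmonoid (Fin d → ℕ)) (hS : S = AddSubmonoid.closure (Set.range g))
    (I : Set (Fin d → ℕ)) (hIS : I ⊆ (S : Set (Fin d → ℕ)))
    (hideal : I + (S : Set (Fin d → ℕ)) ⊆ I) :
    ((S : Set (Fin d → ℕ)) \ I).Finite ↔
      ∀ i : Fin n, ∃ k : ℕ, k ≠ 0 ∧ k • g i ∈ I := by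
  subst hS
  constructor
  · intro hfin i
    by_contra h
    push_neg at h
    obtain ⟨j, hj⟩ := Function.ne_iff.mp (hg i)
    simp only [Pi.zero_apply] at hj
    have hinj : Function.Injective (fun k : ℕ => (k + 1) • g i) := by
      intro k l hkl
      have := congrFun hkl j
      simp only [Pi.smul_apply, smul_eq_mul] at this
      have := Nat.eq_of_mul_eq_mul_right (Nat.pos_of_ne_zero hj) this
      omega
    have hmem : ∀ k : ℕ, (k + 1) • g i ∈
        ((AddSubmonoid.closure (Set.range g) : Set (Fin d → ℕ)) \ I) := by
      intro k
      refine ⟨AddSubmonoid.nsmul_mem _ (AddSubmonoid.subset_closure (Set.mem_range_self i)) _,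
        h (k + 1) (Nat.succ_ne_zero k)⟩
    exact (Set.infinite_of_injective_forall_mem hinj hmem) hfin
  · intro h
    choose k hk0 hkI using h
    have hfin : ({c : Fin n → ℕ | ∀ i, c i < k i}).Finite := by
      have : {c : Fin n → ℕ | ∀ i, c i < k i} = Set.pi Set.univ (fun i => Set.Iio (k i)) := by
        ext c; simp [Set.mem_pi]
      rw [this]
      exact Set.Finite.pi (fun i => Set.finite_Iio _)
    refine Set.Finite.subset (hfin.image (fun c => ∑ i, c i • g i)) ?_
    rintro x ⟨hxS, hxI⟩
    obtain ⟨c, rfl⟩ := (mem_closure_range_iff_sum g x).mp hxS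
    refine ⟨c, fun i => ?_, rfl⟩
    by_contra hci
    push_neg at hci
    apply hxI
    have key : ∑ j, c j • g j =
        k i • g i + ((c i - k i) • g i + ∑ j ∈ Finset.univ.erase i, c j • g j) := by
      rw [← add_assoc, ← add_smul, Nat.add_sub_cancel' hci]
      exact (Finset.add_sum_erase _ _ (Finset.mem_univ i)).symm
    rw [key]
    apply hideal
    refine Set.add_mem_add (hkI i) ?_
    exact AddSubmonoid.add_mem _
      (AddSubmonoid.nsmul_mem _ (AddSubmonoid.subset_closure (Set.mem_range_self i)) _)
      (AddSubmonoid.sum_mem _ (fun j _ =>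
        AddSubmonoid.nsmul_mem _ (AddSubmonoid.subset_closure (Set.mem_range_self j)) _))
end

section
/- Let S ⊆ ℕ^d be the additive submonoid generated by g_1, …, g_n with g_i ≠ 0 for every i, let f_S : ℕ^n → S be the monoid homomorphism sending (a_1, …, a_n) to Σ_{i=1}^n a_i g_i, and let I be an ideal of S. Then S \ I is finite if and only if ℕ^n \ f_S^{-1}(I) is finite. -/
open Pointwise

/-- Let `S = ⟨g_1, …, g_n⟩ ⊆ ℕ^d` with all `g_i ≠ 0`, `f_S : ℕ^n → S` the map
`a ↦ Σ_i a_i g_i`, and `I` an ideal of `S`. Then `S \ I` is finite iff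
`ℕ^n \ f_S⁻¹(I)` is finite. -/
theorem stmt12 {d n : ℕ} (g : Fin n → (Fin d → ℕ)) (hg : ∀ i, g i ≠ 0)
    (S : AddSubmonoid (Fin d → ℕ)) (hS : S = AddSubmonoid.closure (Set.range g))
    (I : Set (Fin d → ℕ)) (hIS : I ⊆ (S : Set (Fin d → ℕ)))
    (hideal : I + (S : Set (Fin d → ℕ)) ⊆ I) :
    ((S : Set (Fin d → ℕ)) \ I).Finite ↔
      ({a : Fin n → ℕ | (∑ i, a i • g i) ∈ I}ᶜ).Finite := by
  set f : (Fin n → ℕ) → (Fin d → ℕ) := fun a => ∑ i, a i • g i with hf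
  have hmem : ∀ s, s ∈ S ↔ ∃ a : Fin n → ℕ, f a = s := by
    intro s
    rw [hS, ← Submodule.span_nat_eq_addSubmonoidClosure, Submodule.mem_toAddSubmonoid,
      Submodule.mem_span_range_iff_exists_fun]
  have hfS : ∀ a, f a ∈ S := fun a => (hmem (f a)).2 ⟨a, rfl⟩
  -- fibers of f are finite
  have hfiber : ∀ s : Fin d → ℕ, {a : Fin n → ℕ | f a = s}.Finite := by
    intro s
    have : {a : Fin n → ℕ | f a = s} ⊆ Set.pi Set.univ (fun _ : Fin n => Set.Iic (∑ j, s j)) := by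
      intro a ha i _
      obtain ⟨j, hj⟩ : ∃ j, g i j ≠ 0 := by
        by_contra h; push_neg at h; exact hg i (funext h)
      have h1 : a i * g i j ≤ s j := by
        have := congrFun ha j
        simp only [hf, Finset.sum_apply, Pi.smul_apply, smul_eq_mul] at this
        rw [← this]
        exact Finset.single_le_sum (f := fun k => a k * g k j) (fun k _ => Nat.zero_le _) (Finset.mem_univ i)
      calc a i ≤ a i * g i j := Nat.le_mul_of_pos_right _ (Nat.pos_of_ne_zero hj)
        _ ≤ s j := h1
        _ ≤ ∑ j, s j := Finset.single_le_sum (fun k _ => Nat.zero_le _) (Finset.mem_univ j)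
    exact (Set.Finite.pi (fun _ => Set.finite_Iic _)).subset this
  constructor
  · intro h
    have : {a : Fin n → ℕ | (∑ i, a i • g i) ∈ I}ᶜ ⊆ ⋃ s ∈ ((S : Set (Fin d → ℕ)) \ I),
        {a : Fin n → ℕ | f a = s} := by
      intro a ha
      simp only [Set.mem_compl_iff, Set.mem_setOf_eq] at ha
      exact Set.mem_biUnion ⟨hfS a, ha⟩ rfl
    exact (h.biUnion (fun s _ => hfiber s)).subset this
  · intro h
    have : (S : Set (Fin d → ℕ)) \ I ⊆ f '' ({a : Fin n → ℕ | (∑ i, a i • g i) ∈ I}ᶜ) := by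
      rintro s ⟨hsS, hsI⟩
      obtain ⟨a, ha⟩ := (hmem s).1 hsS
      exact ⟨a, by simp only [Set.mem_compl_iff, Set.mem_setOf_eq]; rw [show (∑ i, a i • g i) = s from ha]; exact hsI, ha⟩
    exact (h.image f).subset this
end

section
/- Let K be a field, let S ⊆ ℕ^d be the additive submonoid generated by g_1, …, g_n, let ψ : K[Z_1,…,Z_n] → K[Y_1,…,Y_d] be the K-algebra homomorphism with ψ(Z_i) = Y^{g_i}, let J_S = ker ψ, let K[S] be the image of ψ, let u_1, …, u_r ∈ S with chosen factorizations a_k ∈ ℕ^n of u_k, let I_{K[S]} be the ideal of K[S] generated by Y^{u_1}, …, Y^{u_r}, let P_S = J_S + (Z^{a_1}, …, Z^{a_r}), and let ⪯ be a monomial order on K[Z_1,…,Z_n] with initial ideal in_⪯(P_S), the ideal generated by the ⪯-leading monomials of the nonzero elements of P_S. Then { Y^h : h ∈ S and Y^h ∉ I_{K[S]} } = { ψ(Z^t) : t ∈ ℕ^n and Z^t ∉ in_⪯(P_S) }. -/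
set_option maxHeartbeats 1000000
set_option synthInstance.maxHeartbeats 1000000
open MvPolynomial
namespace Stmt16Aux




variable {d n : ℕ} {K : Type*} [Field K]

lemma symm_zero : (Finsupp.equivFunOnFinite.symm (0 : Fin d → ℕ)) = 0 := by
  ext x; simp

lemma psi_mon (g : Fin n → (Fin d → ℕ))
    (ψ : MvPolynomial (Fin n) K →ₐ[K] MvPolynomial (Fin d) K)
    (hψ : ∀ i, ψ (X i) = monomial (Finsupp.equivFunOnFinite.symm (g i)) 1)
    (t : Fin n →₀ ℕ) :
    ψ (monomial t 1) = monomial (Finsupp.equivFunOnFinite.symm (∑ j, t j • g j)) 1 := by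
  induction t using Finsupp.induction with
  | zero =>
      simp only [Finsupp.coe_zero, Pi.zero_apply, zero_smul, Finset.sum_const_zero, symm_zero]
      simp [monomial_zero']
  | single_add i k t hit hk ih =>
      have h1 : (monomial (Finsupp.single i k + t) (1:K)) =
          monomial (Finsupp.single i k) 1 * monomial t 1 := by
        rw [monomial_mul, one_mul]
      rw [h1, map_mul, ih, ← X_pow_eq_monomial, map_pow, hψ, monomial_pow, one_pow,
        monomial_mul, one_mul]
      have h2 : k • Finsupp.equivFunOnFinite.symm (g i)
            + Finsupp.equivFunOnFinite.symm (∑ j, t j • g j)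
          = Finsupp.equivFunOnFinite.symm (∑ j, (Finsupp.single i k + t) j • g j) := by
        ext x
        simp only [Finsupp.add_apply, Finsupp.smul_apply,
          Finsupp.equivFunOnFinite_symm_apply_apply, Finset.sum_apply, Pi.smul_apply,
          smul_eq_mul, Finsupp.single_apply, add_mul, ite_mul, zero_mul]
        rw [Finset.sum_add_distrib]
        simp
      rw [h2]

variable {d n : ℕ} {K : Type*} [Field K]

lemma mem_S_iff (g : Fin n → (Fin d → ℕ)) (S : AddSubmonoid (Fin d → ℕ))
    (hS : S = AddSubmonoid.closure (Set.range g)) (h : Fin d → ℕ) :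
    h ∈ S ↔ ∃ t : Fin n →₀ ℕ, ∑ j, t j • g j = h := by
  subst hS
  constructor
  · intro hh
    induction hh using AddSubmonoid.closure_induction with
    | mem x hx =>
        obtain ⟨i, rfl⟩ := hx
        exact ⟨Finsupp.single i 1, by simp [Finsupp.single_apply, ite_smul]⟩
    | zero => exact ⟨0, by simp⟩
    | add x y _ _ hx hy =>
        obtain ⟨t1, rfl⟩ := hx
        obtain ⟨t2, rfl⟩ := hy
        exact ⟨t1 + t2, by simp [add_smul, Finset.sum_add_distrib]⟩
  · rintro ⟨t, rfl⟩
    refine AddSubmonoid.sum_mem _ fun j _ => nsmul_mem ?_ (t j)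
    exact AddSubmonoid.subset_closure ⟨j, rfl⟩

variable {d n : ℕ} {K : Type*} [Field K]

lemma psi_support (g : Fin n → (Fin d → ℕ))
    (ψ : MvPolynomial (Fin n) K →ₐ[K] MvPolynomial (Fin d) K)
    (hψ : ∀ i, ψ (X i) = monomial (Finsupp.equivFunOnFinite.symm (g i)) 1)
    (p : MvPolynomial (Fin n) K) (m : Fin d →₀ ℕ) (hm : m ∈ (ψ p).support) :
    ∃ v ∈ p.support, Finsupp.equivFunOnFinite.symm (∑ j, v j • g j) = m := by
  by_contra hcon
  push_neg at hcon
  apply mem_support_iff.mp hm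
  conv_lhs => rw [p.as_sum]
  rw [map_sum, coeff_sum]
  refine Finset.sum_eq_zero fun v hv => ?_
  have : (monomial v (coeff v p) : MvPolynomial (Fin n) K) = C (coeff v p) * monomial v 1 := by
    rw [C_mul_monomial, mul_one]
  rw [this, map_mul, algHom_C, algebraMap_eq, psi_mon g ψ hψ, coeff_C_mul, coeff_monomial,
    if_neg (hcon v hv), mul_zero]


variable {d n : ℕ} {K : Type*} [Field K]

lemma le_of_le (le : (Fin n →₀ ℕ) → (Fin n →₀ ℕ) → Prop)
    (hzero : ∀ v, le 0 v)
    (hadd : ∀ w v v' : Fin n →₀ ℕ, le v v' → le (v + w) (v' + w))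
    {x y : Fin n →₀ ℕ} (h : x ≤ y) : le x y := by
  obtain ⟨c, rfl⟩ := le_iff_exists_add.mp h
  have := hadd x 0 c (hzero c)
  simpa [add_comm] using this

lemma exists_min (le : (Fin n →₀ ℕ) → (Fin n →₀ ℕ) → Prop)
    (hlin : IsLinearOrder (Fin n →₀ ℕ) le)
    (hzero : ∀ v, le 0 v)
    (hadd : ∀ w v v' : Fin n →₀ ℕ, le v v' → le (v + w) (v' + w))
    (A : Set (Fin n →₀ ℕ)) (hA : A.Nonempty) :
    ∃ t ∈ A, ∀ t' ∈ A, le t' t → t' = t := by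
  haveI := hlin
  set lt : (Fin n →₀ ℕ) → (Fin n →₀ ℕ) → Prop := fun x y => le x y ∧ ¬ le y x with hlt
  have htr : ∀ x y z : Fin n →₀ ℕ, le x y → le y z → le x z :=
    hlin.toIsPartialOrder.toIsPreorder.toIsTrans.trans
  haveI : IsIrrefl (Fin n →₀ ℕ) lt := ⟨fun a h => h.2 h.1⟩
  haveI : IsTrans (Fin n →₀ ℕ) lt := ⟨fun a b c h1 h2 => ⟨htr _ _ _ h1.1 h2.1,
    fun h => h1.2 (htr _ _ _ h2.1 h)⟩⟩
  haveI : IsStrictOrder (Fin n →₀ ℕ) lt := ⟨⟩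
  have hwf : WellFounded lt := by
    rw [RelEmbedding.wellFounded_iff_isEmpty]
    constructor
    intro f
    obtain ⟨m, k, hmk, hle⟩ := wellQuasiOrdered_le (α := Fin n →₀ ℕ) ⇑f
    have h1 : lt (f k) (f m) := f.map_rel_iff.mpr hmk
    exact h1.2 (le_of_le le hzero hadd hle)
  obtain ⟨t, htA, hmin⟩ := hwf.has_min A hA
  refine ⟨t, htA, fun t' ht' hle' => ?_⟩
  by_contra hne
  exact hmin t' ht' ⟨hle', fun h => hne (hlin.toIsPartialOrder.toAntisymm.antisymm _ _ hle' h)⟩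


variable {d n r : ℕ} {K : Type*} [Field K]

variable (g : Fin n → (Fin d → ℕ)) (S : AddSubmonoid (Fin d → ℕ))
  (ψ : MvPolynomial (Fin n) K →ₐ[K] MvPolynomial (Fin d) K)
  (u : Fin r → (Fin d → ℕ)) (a : Fin r → (Fin n → ℕ))

lemma range_supp (hS : S = AddSubmonoid.closure (Set.range g))
    (hψ : ∀ i, ψ (X i) = monomial (Finsupp.equivFunOnFinite.symm (g i)) 1)
    (f : MvPolynomial (Fin d) K) (hf : f ∈ ψ.range) (m : Fin d →₀ ℕ)
    (hm : m ∈ f.support) : ⇑m ∈ S := by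
  obtain ⟨p, rfl⟩ := hf
  obtain ⟨v, _, heq⟩ := psi_support g ψ hψ p m hm
  exact (mem_S_iff g S hS ⇑m).mpr ⟨v, by rw [← heq]; ext x; simp⟩

lemma IKS_supp (hS : S = AddSubmonoid.closure (Set.range g))
    (hψ : ∀ i, ψ (X i) = monomial (Finsupp.equivFunOnFinite.symm (g i)) 1)
    (IKS : Ideal ψ.range)
    (hIKS : IKS = Ideal.span {y : ψ.range |
        ∃ k, (y : MvPolynomial (Fin d) K) =
          monomial (Finsupp.equivFunOnFinite.symm (u k)) 1})
    (x : ψ.range) (hx : x ∈ IKS) :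
    ∀ m ∈ (x : MvPolynomial (Fin d) K).support, ∃ k, ∃ s ∈ S, ⇑m = s + u k := by
  classical
  rw [hIKS] at hx
  induction hx using Submodule.span_induction with
  | mem y hy =>
      obtain ⟨k, hk⟩ := hy
      intro m hm
      rw [hk, support_monomial, if_neg one_ne_zero, Finset.mem_singleton] at hm
      subst hm
      exact ⟨k, 0, S.zero_mem, by ext x; simp⟩
  | zero =>
      intro m hm
      simp only [ZeroMemClass.coe_zero, support_zero] at hm
      exact absurd hm (Finset.notMem_empty m)
  | add x y hx hy ihx ihy =>
      intro m hm
      have h1 : ((x + y : ψ.range) : MvPolynomial (Fin d) K)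
          = (x : MvPolynomial (Fin d) K) + y := Subalgebra.coe_add _ _ _
      rw [h1] at hm
      rcases Finset.mem_union.mp (MvPolynomial.support_add hm) with h | h
      · exact ihx m h
      · exact ihy m h
  | smul c x hx ih =>
      intro m hm
      have h1 : ((c • x : ψ.range) : MvPolynomial (Fin d) K)
          = (c : MvPolynomial (Fin d) K) * x := Subalgebra.coe_mul _ _ _
      rw [h1] at hm
      classical
      obtain ⟨m1, hm1, m2, hm2, hm12⟩ :=
        Finset.mem_add.mp (MvPolynomial.support_mul _ _ hm)
      obtain ⟨k, s, hsS, hs⟩ := ih m2 hm2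
      refine ⟨k, ⇑m1 + s, S.add_mem (range_supp g S ψ hS hψ _ c.2 m1 hm1) hsS, ?_⟩
      rw [← hm12]
      ext x
      simp [hs, Finsupp.add_apply]
      ring


variable {d n r : ℕ} {K : Type*} [Field K]

variable (g : Fin n → (Fin d → ℕ)) (S : AddSubmonoid (Fin d → ℕ))
  (ψ : MvPolynomial (Fin n) K →ₐ[K] MvPolynomial (Fin d) K)
  (u : Fin r → (Fin d → ℕ)) (a : Fin r → (Fin n → ℕ))

/-- ψ of the monomial with exponent (symm ∘) a k is the monomial with exponent u k -/
lemma psi_ak (hψ : ∀ i, ψ (X i) = monomial (Finsupp.equivFunOnFinite.symm (g i)) 1)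
    (ha : ∀ k, ∑ j, a k j • g j = u k) (k : Fin r) :
    ψ (monomial (Finsupp.equivFunOnFinite.symm (a k)) 1)
      = monomial (Finsupp.equivFunOnFinite.symm (u k)) 1 := by
  rw [psi_mon g ψ hψ]
  congr 1
  rw [← ha k]
  simp

lemma mem_range_of_S (hS : S = AddSubmonoid.closure (Set.range g))
    (hψ : ∀ i, ψ (X i) = monomial (Finsupp.equivFunOnFinite.symm (g i)) 1)
    (s : Fin d → ℕ) (hs : s ∈ S) :
    monomial (Finsupp.equivFunOnFinite.symm s) (1:K) ∈ ψ.range := by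
  obtain ⟨t, ht⟩ := (mem_S_iff g S hS s).mp hs
  exact ⟨monomial t 1, show ψ _ = _ by rw [psi_mon g ψ hψ, ht]⟩

lemma IKS_of (hS : S = AddSubmonoid.closure (Set.range g))
    (hψ : ∀ i, ψ (X i) = monomial (Finsupp.equivFunOnFinite.symm (g i)) 1)
    (IKS : Ideal ψ.range)
    (hIKS : IKS = Ideal.span {y : ψ.range |
        ∃ k, (y : MvPolynomial (Fin d) K) =
          monomial (Finsupp.equivFunOnFinite.symm (u k)) 1})
    (hu : ∀ k, u k ∈ S)
    (s : Fin d → ℕ) (hs : s ∈ S) (k : Fin r)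
    (hmem : monomial (Finsupp.equivFunOnFinite.symm (s + u k)) (1:K) ∈ ψ.range) :
    (⟨_, hmem⟩ : ψ.range) ∈ IKS := by
  rw [hIKS]
  have h1 := mem_range_of_S g S ψ hS hψ s hs
  have h2 := mem_range_of_S g S ψ hS hψ (u k) (hu k)
  have hval : monomial (Finsupp.equivFunOnFinite.symm (s + u k)) (1:K)
      = monomial (Finsupp.equivFunOnFinite.symm s) 1
        * monomial (Finsupp.equivFunOnFinite.symm (u k)) 1 := by
    have he : Finsupp.equivFunOnFinite.symm (s + u k)
        = Finsupp.equivFunOnFinite.symm s + Finsupp.equivFunOnFinite.symm (u k) := by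
      ext x; simp
    rw [monomial_mul, one_mul, he]
  have heq : (⟨_, hmem⟩ : ψ.range)
      = ⟨_, h1⟩ * ⟨_, h2⟩ := Subtype.ext (by rw [Subalgebra.coe_mul]; exact hval)
  rw [heq]
  exact Ideal.mul_mem_left _ _ (Ideal.subset_span ⟨k, rfl⟩)

lemma psi_PS (hψ : ∀ i, ψ (X i) = monomial (Finsupp.equivFunOnFinite.symm (g i)) 1)
    (ha : ∀ k, ∑ j, a k j • g j = u k)
    (IKS : Ideal ψ.range)
    (hIKS : IKS = Ideal.span {y : ψ.range |
        ∃ k, (y : MvPolynomial (Fin d) K) =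
          monomial (Finsupp.equivFunOnFinite.symm (u k)) 1})
    (PS : Ideal (MvPolynomial (Fin n) K))
    (hPS : PS = RingHom.ker ψ + Ideal.span {m : MvPolynomial (Fin n) K |
        ∃ k, m = monomial (Finsupp.equivFunOnFinite.symm (a k)) 1})
    (p : MvPolynomial (Fin n) K) (hp : p ∈ PS) :
    ψ.rangeRestrict p ∈ IKS := by
  rw [hPS, Submodule.add_eq_sup] at hp
  obtain ⟨y, hy, z, hz, rfl⟩ := Submodule.mem_sup.mp hp
  have hy0 : ψ.rangeRestrict y = 0 :=
    Subtype.ext (by simpa using (RingHom.mem_ker).mp hy)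
  rw [map_add, hy0, zero_add]
  clear hp
  induction hz using Submodule.span_induction with
  | mem w hw =>
      obtain ⟨k, rfl⟩ := hw
      rw [hIKS]
      refine Ideal.subset_span ⟨k, ?_⟩
      show ψ _ = _
      exact psi_ak g ψ u a hψ ha k
  | zero => rw [map_zero]; exact IKS.zero_mem
  | add x y hx hy ihx ihy => rw [map_add]; exact IKS.add_mem ihx ihy
  | smul c x hx ih =>
      rw [smul_eq_mul, map_mul]
      exact Ideal.mul_mem_left _ _ ih

lemma IKS_pull (hψ : ∀ i, ψ (X i) = monomial (Finsupp.equivFunOnFinite.symm (g i)) 1)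
    (ha : ∀ k, ∑ j, a k j • g j = u k)
    (IKS : Ideal ψ.range)
    (hIKS : IKS = Ideal.span {y : ψ.range |
        ∃ k, (y : MvPolynomial (Fin d) K) =
          monomial (Finsupp.equivFunOnFinite.symm (u k)) 1})
    (PS : Ideal (MvPolynomial (Fin n) K))
    (hPS : PS = RingHom.ker ψ + Ideal.span {m : MvPolynomial (Fin n) K |
        ∃ k, m = monomial (Finsupp.equivFunOnFinite.symm (a k)) 1})
    (x : ψ.range) (hx : x ∈ IKS) :
    ∃ p ∈ PS, ψ p = (x : MvPolynomial (Fin d) K) := by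
  have hle : IKS ≤ Ideal.map ψ.rangeRestrict PS := by
    rw [hIKS]
    refine Ideal.span_le.mpr ?_
    rintro y ⟨k, hk⟩
    have hmem : (monomial (Finsupp.equivFunOnFinite.symm (a k)) (1:K)) ∈ PS := by
      rw [hPS, Submodule.add_eq_sup]
      exact Submodule.mem_sup_right (Ideal.subset_span ⟨k, rfl⟩)
    have : y = ψ.rangeRestrict (monomial (Finsupp.equivFunOnFinite.symm (a k)) 1) := by
      apply Subtype.ext
      rw [hk]
      exact (psi_ak g ψ u a hψ ha k).symm
    rw [this]
    exact Ideal.mem_map_of_mem _ hmem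
  obtain ⟨p, hpPS, hpx⟩ := (Ideal.mem_map_iff_of_surjective _
    (AlgHom.rangeRestrict_surjective ψ)).mp (hle hx)
  exact ⟨p, hpPS, congrArg Subtype.val hpx⟩

end Stmt16Aux


open Stmt16Aux in
/-- With `ψ : K[Z] → K[Y]`, `Z_i ↦ Y^{g_i}`, `J_S = ker ψ`, `K[S] = range ψ`,
`I_{K[S]} = (Y^{u_1}, …, Y^{u_r})`, `P_S = J_S + (Z^{a_1}, …, Z^{a_r})` and a
monomial order `⪯` with initial ideal `in_⪯(P_S)`, the monomials `Y^h`, `h ∈ S`,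
outside `I_{K[S]}` are exactly the images `ψ(Z^t)` of the monomials `Z^t`
outside `in_⪯(P_S)`. -/
theorem stmt16 {d n r : ℕ} (K : Type*) [Field K]
    (g : Fin n → (Fin d → ℕ))
    (S : AddSubmonoid (Fin d → ℕ)) (hS : S = AddSubmonoid.closure (Set.range g))
    (ψ : MvPolynomial (Fin n) K →ₐ[K] MvPolynomial (Fin d) K)
    (hψ : ∀ i, ψ (X i) = monomial (Finsupp.equivFunOnFinite.symm (g i)) 1)
    (u : Fin r → (Fin d → ℕ)) (hu : ∀ k, u k ∈ S)
    (a : Fin r → (Fin n → ℕ)) (ha : ∀ k, ∑ j, a k j • g j = u k)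
    (IKS : Ideal ψ.range)
    (hIKS : IKS = Ideal.span {y : ψ.range |
        ∃ k, (y : MvPolynomial (Fin d) K) =
          monomial (Finsupp.equivFunOnFinite.symm (u k)) 1})
    (PS : Ideal (MvPolynomial (Fin n) K))
    (hPS : PS = RingHom.ker ψ + Ideal.span {m : MvPolynomial (Fin n) K |
        ∃ k, m = monomial (Finsupp.equivFunOnFinite.symm (a k)) 1})
    -- a monomial order on `K[Z_1,…,Z_n]`, given as a term order on the exponents
    (le : (Fin n →₀ ℕ) → (Fin n →₀ ℕ) → Prop)
    (hlin : IsLinearOrder (Fin n →₀ ℕ) le)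
    (hzero : ∀ v, le 0 v)
    (hadd : ∀ w v v' : Fin n →₀ ℕ, le v v' → le (v + w) (v' + w))
    -- the initial ideal of `P_S`: generated by the leading monomials of its
    -- nonzero elements
    (inPS : Ideal (MvPolynomial (Fin n) K))
    (hinPS : inPS = Ideal.span {m : MvPolynomial (Fin n) K |
        ∃ p ∈ PS, p ≠ 0 ∧ ∃ t ∈ p.support,
          (∀ s ∈ p.support, le s t) ∧ m = monomial t 1}) :
    {y : MvPolynomial (Fin d) K | ∃ h : Fin d → ℕ, h ∈ S ∧
        y = monomial (Finsupp.equivFunOnFinite.symm h) 1 ∧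
        ∀ hy : y ∈ ψ.range, (⟨y, hy⟩ : ψ.range) ∉ IKS} =
      {y : MvPolynomial (Fin d) K | ∃ t : Fin n →₀ ℕ,
        monomial t (1 : K) ∉ inPS ∧ y = ψ (monomial t 1)} := by
  classical
  have hrefl : ∀ v, le v v := hlin.toIsPartialOrder.toIsPreorder.toRefl.refl
  -- the initial ideal as a span of an image of monomials
  set T : Set (Fin n →₀ ℕ) :=
    {s | ∃ p ∈ PS, p ≠ 0 ∧ s ∈ p.support ∧ ∀ s' ∈ p.support, le s' s} with hT
  have hspan : inPS = Ideal.span ((fun s => monomial s (1:K)) '' T) := by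
    rw [hinPS]
    congr 1
    ext m
    constructor
    · rintro ⟨p, hp, h0, t, ht, hle, rfl⟩
      exact ⟨t, ⟨p, hp, h0, ht, hle⟩, rfl⟩
    · rintro ⟨t, ⟨p, hp, h0, ht, hle⟩, rfl⟩
      exact ⟨p, hp, h0, t, ht, hle, rfl⟩
  have hker_le : RingHom.ker ψ ≤ PS := by
    rw [hPS, Submodule.add_eq_sup]; exact le_sup_left
  ext y
  simp only [Set.mem_setOf_eq]
  constructor
  · rintro ⟨h, hhS, rfl, hnot⟩
    set A : Set (Fin n →₀ ℕ) := {t | ∑ j, t j • g j = h} with hA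
    obtain ⟨t0, ht0⟩ := (mem_S_iff g S hS h).mp hhS
    obtain ⟨t, htA, hmin⟩ := exists_min le hlin hzero hadd A ⟨t0, ht0⟩
    have htA' : ∑ j, t j • g j = h := htA
    have hpsit : ψ (monomial t 1) = monomial (Finsupp.equivFunOnFinite.symm h) 1 := by
      rw [psi_mon g ψ hψ, htA']
    refine ⟨t, ?_, hpsit.symm⟩
    intro htin
    rw [hspan, mem_ideal_span_monomial_image] at htin
    obtain ⟨s, hsT, hst⟩ := htin t (by
      rw [support_monomial, if_neg one_ne_zero]; exact Finset.mem_singleton_self t)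
    obtain ⟨p, hpPS, hp0, hssupp, hslead⟩ := hsT
    set w : Fin n →₀ ℕ := t - s with hw
    have hws : s + w = t := add_tsub_cancel_of_le hst
    have hws' : w + s = t := by rw [add_comm]; exact hws
    set c : K := coeff s p with hc
    have hcne : c ≠ 0 := mem_support_iff.mp hssupp
    set q : MvPolynomial (Fin n) K := monomial w c⁻¹ * p with hq
    have hqPS : q ∈ PS := Ideal.mul_mem_left _ _ hpPS
    have hqt : coeff t q = 1 := by
      rw [hq, ← hws', coeff_monomial_mul]
      exact inv_mul_cancel₀ hcne
    set r0 : MvPolynomial (Fin n) K := monomial t 1 - q with hr0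
    -- support analysis of r0
    have hr0supp : ∀ m ∈ r0.support, (∃ s' ∈ p.support, m = w + s') ∧ m ≠ t := by
      intro m hm
      have hcm : coeff m r0 ≠ 0 := mem_support_iff.mp hm
      have hmt : m ≠ t := by
        intro hmt; subst hmt
        apply hcm
        rw [hr0, coeff_sub, hqt, coeff_monomial, if_pos rfl, sub_self]
      have hcq : coeff m q ≠ 0 := by
        intro h0
        apply hcm
        rw [hr0, coeff_sub, h0, coeff_monomial, if_neg (Ne.symm hmt), sub_zero]
      have hmq : m ∈ q.support := mem_support_iff.mpr hcq
      have := MvPolynomial.support_mul _ _ hmq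
      rw [support_monomial, if_neg (inv_ne_zero hcne)] at this
      obtain ⟨m1, hm1, m2, hm2, hm12⟩ := Finset.mem_add.mp this
      rw [Finset.mem_singleton] at hm1
      subst hm1
      exact ⟨⟨m2, hm2, hm12.symm⟩, hmt⟩
    -- ψ r0 has no coefficient at h
    have hpsir0 : coeff (Finsupp.equivFunOnFinite.symm h) (ψ r0) = 0 := by
      by_contra hco
      obtain ⟨v, hv, hveq⟩ :=
        psi_support g ψ hψ r0 _ (mem_support_iff.mpr hco)
      obtain ⟨⟨s', hs', hveq2⟩, hvt⟩ := hr0supp v hv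
      have hvA : v ∈ A := Finsupp.equivFunOnFinite.symm.injective hveq
      have hlev : le v t := by
        rw [hveq2, add_comm w s', ← hws]
        exact hadd w s' s (hslead s' hs')
      exact hvt (hmin v hvA hlev)
    -- ψ q lands in IKS and has coefficient 1 at h
    have hIKSq := psi_PS g ψ u a hψ ha IKS hIKS PS hPS q hqPS
    have hcoefq : coeff (Finsupp.equivFunOnFinite.symm h) (ψ q) = 1 := by
      have hqr : q = monomial t 1 - r0 := by rw [hr0]; ring
      rw [hqr, map_sub, coeff_sub, hpsit, hpsir0, coeff_monomial, if_pos rfl, sub_zero]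
    have hsupp := IKS_supp g S ψ u hS hψ IKS hIKS (ψ.rangeRestrict q) hIKSq
      (Finsupp.equivFunOnFinite.symm h)
      (by
        show _ ∈ (ψ q).support
        rw [mem_support_iff, hcoefq]; exact one_ne_zero)
    obtain ⟨k, s1, hs1S, hfun⟩ := hsupp
    have hh : h = s1 + u k := by
      rw [← hfun]; funext x; simp
    have hymem : monomial (Finsupp.equivFunOnFinite.symm h) (1:K) ∈ ψ.range :=
      ⟨monomial t 1, hpsit⟩
    subst hh
    exact hnot hymem (IKS_of g S ψ u hS hψ IKS hIKS hu s1 hs1S k hymem)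
  · rintro ⟨t, htin, rfl⟩
    refine ⟨∑ j, t j • g j, (mem_S_iff g S hS _).mpr ⟨t, rfl⟩,
      psi_mon g ψ hψ t, ?_⟩
    intro hy hmem
    obtain ⟨p, hpPS, hpval⟩ := IKS_pull g ψ u a hψ ha IKS hIKS PS hPS _ hmem
    have hker : monomial t 1 - p ∈ RingHom.ker ψ := by
      rw [RingHom.mem_ker]
      show ψ _ = 0
      rw [map_sub]
      rw [show ψ p = ψ (monomial t 1) from hpval]
      exact sub_self _
    have htPS : monomial t (1:K) ∈ PS := by
      have := PS.add_mem (hker_le hker) hpPS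
      simpa using this
    apply htin
    rw [hinPS]
    refine Ideal.subset_span ⟨monomial t 1, htPS, ?_, t, ?_, ?_, rfl⟩
    · intro h0
      have := congrArg (coeff t) h0
      rw [coeff_monomial, if_pos rfl, coeff_zero] at this
      exact one_ne_zero this
    · rw [support_monomial, if_neg one_ne_zero]; exact Finset.mem_singleton_self t
    · intro s hs
      rw [support_monomial, if_neg one_ne_zero, Finset.mem_singleton] at hs
      rw [hs]
      exact hrefl t
end

section
/- Let K be a field, let S ⊆ ℕ^d be the additive submonoid generated by g_1, …, g_n, let ψ : K[Z_1,…,Z_n] → K[Y_1,…,Y_d] be the K-algebra homomorphism with ψ(Z_i) = Y^{g_i}, let J_S = ker ψ, let I = X + S be an ideal of S with X = {u_1, …, u_r} ⊆ S, choose factorizations a_k ∈ ℕ^n of u_k, and set P_S = J_S + (Z^{a_1}, …, Z^{a_r}). Then S \ I is a finite set if and only if the quotient ring K[Z_1,…,Z_n]/P_S is finite-dimensional as a K-vector space (i.e., P_S is a zero-dimensional ideal). -/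
open MvPolynomial Pointwise

private lemma aux_prod_monomial {σ K ι : Type*} [CommSemiring K] (s : Finset ι)
    (f : ι → (σ →₀ ℕ)) :
    (∏ i ∈ s, monomial (f i) (1 : K)) = monomial (∑ i ∈ s, f i) 1 := by
  induction s using Finset.cons_induction with
  | empty => simp
  | cons a s ha ih => rw [Finset.prod_cons, Finset.sum_cons, ih, monomial_mul, one_mul]

private lemma aux_mem_closure {d n : ℕ} (g : Fin n → (Fin d → ℕ)) (x : Fin d → ℕ) :
    x ∈ AddSubmonoid.closure (Set.range g) ↔ ∃ b : Fin n → ℕ, ∑ i, b i • g i = x := by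
  constructor
  · intro hx
    induction hx using AddSubmonoid.closure_induction with
    | mem y hy =>
      obtain ⟨j, rfl⟩ := hy
      exact ⟨Pi.single j 1, by simp [Pi.single_apply, ite_smul, Finset.sum_ite_eq]⟩
    | zero => exact ⟨0, by simp⟩
    | add y z _ _ hy hz =>
      obtain ⟨b, rfl⟩ := hy; obtain ⟨c, rfl⟩ := hz
      exact ⟨b + c, by simp [add_smul, Finset.sum_add_distrib]⟩
  · rintro ⟨b, rfl⟩
    exact AddSubmonoid.sum_mem _ fun i _ =>
      nsmul_mem (AddSubmonoid.subset_closure (Set.mem_range_self i)) _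

private lemma aux_symm_add {α : Type*} [Finite α] (x y : α → ℕ) :
    Finsupp.equivFunOnFinite.symm (x + y)
      = Finsupp.equivFunOnFinite.symm x + Finsupp.equivFunOnFinite.symm y := by
  ext i; simp

private lemma aux_coe_sum {d n : ℕ} (g : Fin n → (Fin d → ℕ)) (b : Fin n → ℕ) :
    ⇑(∑ i, b i • Finsupp.equivFunOnFinite.symm (g i)) = ∑ i, b i • g i := by
  ext j
  rw [Finsupp.finset_sum_apply]
  simp

private lemma aux_coe_symm {α : Type*} [Finite α] (x : α → ℕ) :
    ⇑(Finsupp.equivFunOnFinite.symm x) = x := by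
  ext j; simp

private lemma aux_psi_monomial {d n : ℕ} {K : Type*} [Field K]
    (g : Fin n → (Fin d → ℕ))
    (ψ : MvPolynomial (Fin n) K →ₐ[K] MvPolynomial (Fin d) K)
    (hψ : ∀ i, ψ (X i) = monomial (Finsupp.equivFunOnFinite.symm (g i)) 1)
    (b : Fin n → ℕ) :
    ψ (monomial (Finsupp.equivFunOnFinite.symm b) 1)
      = monomial (Finsupp.equivFunOnFinite.symm (∑ i, b i • g i)) 1 := by
  have h1 : monomial (Finsupp.equivFunOnFinite.symm b) (1 : K) = ∏ i, X i ^ b i := by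
    rw [monic_monomial_eq]
    rw [Finsupp.prod_fintype _ _ (fun i => pow_zero _)]
    simp
  rw [h1, map_prod]
  simp_rw [map_pow, hψ, monomial_pow, one_pow]
  rw [aux_prod_monomial]
  have h2 : ∑ i, b i • Finsupp.equivFunOnFinite.symm (g i)
      = Finsupp.equivFunOnFinite.symm (∑ i, b i • g i) := by
    ext j
    rw [Finsupp.finset_sum_apply]
    simp
  rw [h2]

/-- Let `S = ⟨g_1, …, g_n⟩ ⊆ ℕ^d`, `I = X + S` an ideal of `S` with
`X = {u_1, …, u_r} ⊆ S`, `ψ : K[Z] → K[Y]` the map `Z_i ↦ Y^{g_i}`,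
`J_S = ker ψ` and `P_S = J_S + (Z^{a_1}, …, Z^{a_r})` for chosen factorizations
`a_k` of the `u_k`. Then `S \ I` is finite iff `K[Z]/P_S` is a
finite-dimensional `K`-vector space. -/
theorem stmt17 {d n r : ℕ} (K : Type*) [Field K]
    (g : Fin n → (Fin d → ℕ))
    (S : AddSubmonoid (Fin d → ℕ)) (hS : S = AddSubmonoid.closure (Set.range g))
    (ψ : MvPolynomial (Fin n) K →ₐ[K] MvPolynomial (Fin d) K)
    (hψ : ∀ i, ψ (X i) = monomial (Finsupp.equivFunOnFinite.symm (g i)) 1)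
    (u : Fin r → (Fin d → ℕ)) (hu : ∀ k, u k ∈ S)
    (I : Set (Fin d → ℕ)) (hI : I = Set.range u + (S : Set (Fin d → ℕ)))
    (a : Fin r → (Fin n → ℕ)) (ha : ∀ k, ∑ j, a k j • g j = u k)
    (PS : Ideal (MvPolynomial (Fin n) K))
    (hPS : PS = RingHom.ker ψ + Ideal.span {m : MvPolynomial (Fin n) K |
        ∃ k, m = monomial (Finsupp.equivFunOnFinite.symm (a k)) 1}) :
    ((S : Set (Fin d → ℕ)) \ I).Finite ↔
      FiniteDimensional K (MvPolynomial (Fin n) K ⧸ PS) := by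
  classical
  set Mset : Set (MvPolynomial (Fin n) K) :=
    {m : MvPolynomial (Fin n) K | ∃ k, m = monomial (Finsupp.equivFunOnFinite.symm (a k)) 1}
    with hMset
  have hmemS : ∀ x : Fin d → ℕ, x ∈ S ↔ ∃ b : Fin n → ℕ, ∑ i, b i • g i = x := by
    intro x; rw [hS]; exact aux_mem_closure g x
  have hgS : ∀ i, g i ∈ S := fun i => hS ▸ AddSubmonoid.subset_closure (Set.mem_range_self i)
  have hpsi : ∀ b : Fin n → ℕ, ψ (monomial (Finsupp.equivFunOnFinite.symm b) 1)
      = monomial (Finsupp.equivFunOnFinite.symm (∑ i, b i • g i)) 1 :=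
    aux_psi_monomial g ψ hψ
  -- membership of I
  have hI_add : ∀ x ∈ I, ∀ t ∈ S, x + t ∈ I := by
    intro x hx t ht
    rw [hI] at hx ⊢
    obtain ⟨y, hy, z, hz, rfl⟩ := Set.mem_add.mp hx
    exact Set.mem_add.mpr ⟨y, hy, z + t, add_mem hz ht, (add_assoc _ _ _).symm⟩
  have hu_mem : ∀ k, u k ∈ I := by
    intro k
    rw [hI]
    exact Set.mem_add.mpr ⟨u k, Set.mem_range_self k, 0, zero_mem _, add_zero _⟩
  -- support of ψ f lies in S
  have hsuppS : ∀ f : MvPolynomial (Fin n) K, ∀ m ∈ (ψ f).support, ⇑m ∈ S := by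
    intro f
    induction f using MvPolynomial.induction_on with
    | C c =>
      intro m hm
      have hc : ψ (C c) = C c := by
        simpa [MvPolynomial.algebraMap_eq] using ψ.commutes c
      rw [hc, C_apply] at hm
      have := support_monomial_subset hm
      rw [Finset.mem_singleton] at this
      subst this
      simpa using zero_mem S
    | add p q hp hq =>
      intro m hm
      rw [map_add] at hm
      rcases Finset.mem_union.mp (support_add hm) with h | h
      · exact hp m h
      · exact hq m h
    | mul_X p i hp =>
      intro m hm
      rw [map_mul, hψ i] at hm
      obtain ⟨m1, hm1, m2, hm2, rfl⟩ := Finset.mem_add.mp (support_mul _ _ hm)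
      have h2 := support_monomial_subset hm2
      rw [Finset.mem_singleton] at h2
      subst h2
      have : ⇑(m1 + Finsupp.equivFunOnFinite.symm (g i)) = ⇑m1 + g i := by
        ext j; simp
      rw [this]
      exact add_mem (hp m1 hm1) (hgS i)
  -- support of ψ of elements of the monomial ideal lies in I
  have hsuppI : ∀ f ∈ Ideal.span Mset, ∀ m ∈ (ψ f).support, ⇑m ∈ I := by
    intro f hf
    induction hf using Submodule.span_induction with
    | mem x hx =>
      obtain ⟨k, rfl⟩ := hx
      intro m hm
      rw [hpsi, ha k] at hm
      have := support_monomial_subset hm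
      rw [Finset.mem_singleton] at this
      subst this
      rw [aux_coe_symm]
      exact hu_mem k
    | zero => intro m hm; simp at hm
    | add x y hx hy ihx ihy =>
      intro m hm
      rw [map_add] at hm
      rcases Finset.mem_union.mp (support_add hm) with h | h
      · exact ihx m h
      · exact ihy m h
    | smul c x hx ihx =>
      intro m hm
      rw [smul_eq_mul, map_mul] at hm
      obtain ⟨m1, hm1, m2, hm2, rfl⟩ := Finset.mem_add.mp (support_mul _ _ hm)
      have : ⇑(m1 + m2) = ⇑m2 + ⇑m1 := by ext j; simp [add_comm]
      rw [this]
      exact hI_add _ (ihx m2 hm2) _ (hsuppS c m1 hm1)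
  -- the linear map to the coefficient space on S \ I
  set s : Set (Fin d →₀ ℕ) := {m : Fin d →₀ ℕ | ⇑m ∈ (S : Set (Fin d → ℕ)) \ I} with hs
  let L : MvPolynomial (Fin n) K →ₗ[K] (↥s →₀ K) :=
    { toFun := fun f => Finsupp.subtypeDomain (· ∈ s) (AddMonoidAlgebra.coeff (ψ f))
      map_add' := fun f g => by
        show Finsupp.subtypeDomain (· ∈ s) (AddMonoidAlgebra.coeff (ψ (f + g))) = _
        rw [map_add, AddMonoidAlgebra.coeff_add]
        exact Finsupp.subtypeDomain_add
      map_smul' := fun c f => by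
        show Finsupp.subtypeDomain (· ∈ s) (AddMonoidAlgebra.coeff (ψ (c • f)))
          = c • Finsupp.subtypeDomain (· ∈ s) (AddMonoidAlgebra.coeff (ψ f))
        rw [map_smul]
        ext x
        simp only [Finsupp.subtypeDomain_apply, Finsupp.smul_apply, RingHom.id_apply]
        exact coeff_smul x c (ψ f) }
  have hL : ∀ f, L f = Finsupp.subtypeDomain (· ∈ s) (AddMonoidAlgebra.coeff (ψ f)) := fun f => rfl
  have hLcoeff : ∀ (f : MvPolynomial (Fin n) K) (m : Fin d →₀ ℕ) (hm : m ∈ s),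
      L f ⟨m, hm⟩ = coeff m (ψ f) := by
    intro f m hm
    rw [hL]
    rfl
  -- PS ⊆ ker L
  have hPS_ker : ∀ f ∈ PS, L f = 0 := by
    intro f hf
    rw [hPS, Submodule.add_eq_sup] at hf
    obtain ⟨j, hj, h, hh, rfl⟩ := Submodule.mem_sup.mp hf
    rw [map_add]
    have h1 : L j = 0 := by
      rw [hL, RingHom.mem_ker.mp hj]
      rfl
    have h2 : L h = 0 := by
      ext ⟨m, hm⟩
      rw [hLcoeff]
      by_contra h0
      exact hm.2 (hsuppI h hh m (mem_support_iff.mpr h0))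
    rw [h1, h2, add_zero]
  -- ker L ⊆ PS
  have hker_PS : ∀ f, L f = 0 → f ∈ PS := by
    intro f hf
    have hcoeff0 : ∀ m ∈ (ψ f).support, ⇑m ∈ I := by
      intro m hm
      by_contra hmI
      have hmS : ⇑m ∈ S := hsuppS f m hm
      have hmem : m ∈ s := ⟨hmS, hmI⟩
      have := hLcoeff f m hmem
      rw [hf] at this
      exact mem_support_iff.mp hm (by simpa using this.symm)
    -- choose decompositions
    have hchoice : ∀ m ∈ (ψ f).support, ∃ kk : Fin r, ∃ bb : Fin n → ℕ,
        u kk + ∑ i, bb i • g i = ⇑m := by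
      intro m hm
      have := hcoeff0 m hm
      rw [hI] at this
      obtain ⟨y, ⟨kk, rfl⟩, z, hz, hyz⟩ := Set.mem_add.mp this
      obtain ⟨bb, rfl⟩ := (hmemS z).mp hz
      exact ⟨kk, bb, hyz⟩
    choose k b hkb using hchoice
    set h : MvPolynomial (Fin n) K := ∑ m ∈ (ψ f).support.attach,
      C (coeff m.1 (ψ f)) * (monomial (Finsupp.equivFunOnFinite.symm (a (k m.1 m.2))) 1 *
        monomial (Finsupp.equivFunOnFinite.symm (b m.1 m.2)) 1) with hdef
    have hh_mem : h ∈ Ideal.span Mset := by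
      refine Ideal.sum_mem _ fun m hm => ?_
      exact Ideal.mul_mem_left _ _
        (Ideal.mul_mem_right _ _ (Ideal.subset_span ⟨k m.1 m.2, rfl⟩))
    have hpsih : ψ h = ψ f := by
      rw [hdef, map_sum]
      have heach : ∀ m ∈ (ψ f).support.attach,
          ψ (C (coeff m.1 (ψ f)) *
            (monomial (Finsupp.equivFunOnFinite.symm (a (k m.1 m.2))) 1 *
              monomial (Finsupp.equivFunOnFinite.symm (b m.1 m.2)) 1))
            = monomial m.1 (coeff m.1 (ψ f)) := by
        intro m _
        have hc : ψ (C (coeff m.1 (ψ f))) = C (coeff m.1 (ψ f)) := by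
          simpa [MvPolynomial.algebraMap_eq] using ψ.commutes (coeff m.1 (ψ f))
        rw [map_mul, map_mul, hc, hpsi, hpsi, monomial_mul, one_mul, ← aux_symm_add,
          ha (k m.1 m.2), hkb m.1 m.2, Finsupp.equivFunOnFinite_symm_coe,
          C_mul_monomial, mul_one]
      rw [Finset.sum_congr rfl heach, Finset.sum_attach _ (fun m => monomial m (coeff m (ψ f)))]
      exact (MvPolynomial.as_sum (ψ f)).symm
    have hfh : f - h ∈ RingHom.ker ψ := by
      rw [RingHom.mem_ker, map_sub, hpsih, sub_self]
    rw [hPS, Submodule.add_eq_sup]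
    exact Submodule.mem_sup.mpr ⟨f - h, hfh, h, hh_mem, by ring⟩
  -- surjectivity of L
  have hLsurj : Function.Surjective L := by
    rw [← LinearMap.range_eq_top, eq_top_iff,
      ← (Finsupp.basisSingleOne (R := K) (ι := ↥s)).span_eq, Submodule.span_le]
    rintro _ ⟨⟨m, hm⟩, rfl⟩
    obtain ⟨bb, hbb⟩ := (hmemS ⇑m).mp hm.1
    refine ⟨monomial (Finsupp.equivFunOnFinite.symm bb) 1, ?_⟩
    have hpm : ψ (monomial (Finsupp.equivFunOnFinite.symm bb) 1) = monomial m 1 := by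
      rw [hpsi, hbb, Finsupp.equivFunOnFinite_symm_coe]
    ext ⟨m', hm'⟩
    rw [hLcoeff, hpm, Finsupp.coe_basisSingleOne, coeff_monomial, Finsupp.single_apply]
    by_cases hmm : m = m'
    · subst hmm
      simp
    · have hne : ¬((⟨m, hm⟩ : ↥s) = ⟨m', hm'⟩) := by
        simpa [Subtype.ext_iff] using hmm
      simp [hmm, hne]
  -- the kernel is PS
  have hker : PS.restrictScalars K = LinearMap.ker L := by
    ext f
    constructor
    · intro hf
      exact LinearMap.mem_ker.mpr (hPS_ker f hf)
    · intro hf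
      exact hker_PS f (LinearMap.mem_ker.mp hf)
  -- assemble the linear equivalence
  let E : (MvPolynomial (Fin n) K ⧸ PS) ≃ₗ[K] (↥s →₀ K) :=
    (Submodule.Quotient.restrictScalarsEquiv K PS).symm ≪≫ₗ
      Submodule.quotEquivOfEq _ _ hker ≪≫ₗ L.quotKerEquivOfSurjective hLsurj
  -- finish
  have hsets : ((S : Set (Fin d → ℕ)) \ I).Finite ↔ s.Finite := by
    have hset : s = ⇑(Finsupp.equivFunOnFinite (α := Fin d) (M := ℕ)) ⁻¹'
        ((S : Set (Fin d → ℕ)) \ I) := rfl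
    constructor
    · intro hT
      rw [hset]
      exact hT.preimage (Equiv.injective _).injOn
    · intro hs'
      have : ((S : Set (Fin d → ℕ)) \ I)
          = ⇑(Finsupp.equivFunOnFinite (α := Fin d) (M := ℕ)) '' s := by
        rw [hset, Set.image_preimage_eq _ (Equiv.surjective _)]
      rw [this]
      exact hs'.image _
  rw [hsets]
  constructor
  · intro hfin
    haveI : Finite ↥s := hfin.to_subtype
    haveI : Module.Finite K (↥s →₀ K) := inferInstance
    exact Module.Finite.equiv E.symm
  · intro hfd
    haveI : Module.Finite K (↥s →₀ K) := Module.Finite.equiv E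
    have : Finite ↥s :=
      Module.Finite.finite_basis (Finsupp.basisSingleOne (R := K) (ι := ↥s))
    exact Set.finite_coe_iff.mp this
end

section
/- Let S ⊆ ℕ^d be the additive submonoid generated by g_1, …, g_n with g_i ≠ 0 for every i, and let X ⊆ S. Then the Apéry set Ap(S, X) = {s ∈ S : s − x ∉ S for all x ∈ X} is finite if and only if for every i ∈ {1,…,n} there exists k_i ∈ ℕ \ {0} such that k_i·g_i ∈ X + S. -/
open Pointwise

/-- Let `S = ⟨g_1, …, g_n⟩ ⊆ ℕ^d` with all `g_i ≠ 0` and `X ⊆ S`. The Apéry set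
`Ap(S, X) = {s ∈ S : s - x ∉ S for all x ∈ X}` is finite iff for every `i` there
is `k_i ≠ 0` with `k_i·g_i ∈ X + S`. -/
theorem stmt18 {d n : ℕ} (g : Fin n → (Fin d → ℕ)) (hg : ∀ i, g i ≠ 0)
    (S : AddSubmonoid (Fin d → ℕ)) (hS : S = AddSubmonoid.closure (Set.range g))
    (X : Set (Fin d → ℕ)) (hX : X ⊆ (S : Set (Fin d → ℕ))) :
    {s : Fin d → ℕ | s ∈ S ∧ ∀ x ∈ X, ¬ ∃ y ∈ S, s = x + y}.Finite ↔
      ∀ i : Fin n, ∃ k : ℕ, k ≠ 0 ∧ k • g i ∈ X + (S : Set (Fin d → ℕ)) := by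
  have hgen : ∀ i, g i ∈ S := by
    intro i; rw [hS]; exact AddSubmonoid.subset_closure ⟨i, rfl⟩
  have hsum : ∀ a : Fin n → ℕ, (∑ j, a j • g j) ∈ S := by
    intro a
    exact AddSubmonoid.sum_mem S (fun j _ => AddSubmonoid.nsmul_mem S (hgen j) (a j))
  have hrepr : ∀ s ∈ S, ∃ a : Fin n → ℕ, s = ∑ j, a j • g j := by
    intro s hsS
    rw [hS] at hsS
    induction hsS using AddSubmonoid.closure_induction with
    | mem x hx =>
      obtain ⟨j, rfl⟩ := hx
      exact ⟨fun j' => if j' = j then 1 else 0, by simp⟩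
    | zero => exact ⟨0, by simp⟩
    | add x y hx hy ihx ihy =>
      obtain ⟨a, rfl⟩ := ihx
      obtain ⟨b, rfl⟩ := ihy
      exact ⟨a + b, by simp [add_smul, Finset.sum_add_distrib]⟩
  constructor
  · intro hfin i
    by_contra hcon
    push_neg at hcon
    have hmem : ∀ m : ℕ, (m+1) • g i ∈
        {s : Fin d → ℕ | s ∈ S ∧ ∀ x ∈ X, ¬ ∃ y ∈ S, s = x + y} := by
      intro m
      refine ⟨AddSubmonoid.nsmul_mem S (hgen i) _, ?_⟩
      rintro x hx ⟨y, hy, hxy⟩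
      exact hcon (m+1) (Nat.succ_ne_zero m)
        (Set.mem_add.mpr ⟨x, hx, y, hy, hxy.symm⟩)
    obtain ⟨c, hc⟩ : ∃ c, g i c ≠ 0 := by
      by_contra h; push_neg at h; exact hg i (funext h)
    have hinj : Function.Injective (fun m : ℕ => (m+1) • g i) := by
      intro a b hab
      have h2 := congrFun hab c
      simp only [Pi.smul_apply, smul_eq_mul] at h2
      have := Nat.eq_of_mul_eq_mul_right (Nat.pos_of_ne_zero hc) h2
      omega
    exact (Set.infinite_of_injective_forall_mem hinj hmem) hfin
  · intro hk
    choose k hk0 hkmem using hk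
    have hsub : {s : Fin d → ℕ | s ∈ S ∧ ∀ x ∈ X, ¬ ∃ y ∈ S, s = x + y} ⊆
        (fun a : Fin n → ℕ => ∑ j, a j • g j) '' (Set.univ.pi fun j => Set.Iio (k j)) := by
      rintro s ⟨hsS, hap⟩
      obtain ⟨a, rfl⟩ := hrepr s hsS
      refine ⟨a, ?_, rfl⟩
      intro j _
      simp only [Set.mem_Iio]
      by_contra hge
      push_neg at hge
      -- a j ≥ k j, so s ∈ X + S, contradiction
      obtain ⟨x, hx, y, hy, hxy⟩ := Set.mem_add.mp (hkmem j)
      set b : Fin n → ℕ := fun j' => if j' = j then a j - k j else a j' with hb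
      have hsplit : (∑ j', a j' • g j') = k j • g j + ∑ j', b j' • g j' := by
        have h1 : k j • g j = ∑ j', (if j' = j then k j else 0) • g j' := by
          rw [Finset.sum_eq_single j]
          · simp
          · intro j' _ hne; simp [hne]
          · intro h; exact absurd (Finset.mem_univ j) h
        rw [h1, ← Finset.sum_add_distrib]
        refine Finset.sum_congr rfl fun j' _ => ?_
        rcases eq_or_ne j' j with rfl | hne
        · simp only [hb, if_pos rfl, eq_self_iff_true, if_true, ← add_smul]
          congr 1
          omega
        · simp [hb, hne]
      have hyS : y + ∑ j', b j' • g j' ∈ S := S.add_mem hy (hsum b)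
      exact hap x hx ⟨y + ∑ j', b j' • g j', hyS, by
        rw [hsplit, ← hxy, add_assoc]⟩
    exact Set.Finite.subset (Set.Finite.image _
      (Set.Finite.pi fun j => Set.finite_Iio (k j))) hsub
end

section
/- Let S ⊆ ℕ^d be the additive submonoid generated by g_1, …, g_n with g_i ≠ 0 for every i, and suppose r ≤ n is such that cone({g_1,…,g_n}) = cone({g_1,…,g_r}), i.e., every g_j is a nonnegative rational linear combination of g_1, …, g_r. Let E = {g_1, …, g_r}. Then the Apéry set Ap(S, E) = {s ∈ S : s − g_i ∉ S for all i ∈ {1,…,r}} is a finite set. -/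
/-- Let `S = ⟨g_1, …, g_n⟩ ⊆ ℕ^d` with all `g_i ≠ 0`, such that the first `r`
generators span the cone of all of them (a set of extreme rays `E`). Then the
Apéry set `Ap(S, E) = {s ∈ S : s - g_t ∉ S for all t < r}` is finite. -/
theorem stmt19 {d n : ℕ} (r : ℕ) (hr : r ≤ n) (g : Fin n → (Fin d → ℕ))
    (hg : ∀ i, g i ≠ 0)
    (hcone : ∀ j : Fin n, ∃ q : Fin n → ℚ, (∀ t, 0 ≤ q t) ∧
        (∀ t : Fin n, ¬ (t.val < r) → q t = 0) ∧
        (fun k => (g j k : ℚ)) = ∑ t, q t • fun k => (g t k : ℚ))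
    (S : AddSubmonoid (Fin d → ℕ)) (hS : S = AddSubmonoid.closure (Set.range g)) :
    {s : Fin d → ℕ | s ∈ S ∧ ∀ t : Fin n, t.val < r → ¬ ∃ y ∈ S, s = g t + y}.Finite := by
  classical
  -- Step A: integral relations M j • g j = ∑ t, c j t • g t with c supported on t < r
  have key : ∀ j : Fin n, ∃ (M : ℕ) (c : Fin n → ℕ), 0 < M ∧
      (∀ t : Fin n, ¬ t.val < r → c t = 0) ∧ M • g j = ∑ t, c t • g t := by
    intro j
    obtain ⟨q, hq0, hqr, hqs⟩ := hcone j
    set M : ℕ := ∏ t, (q t).den with hM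
    have hMpos : 0 < M := Finset.prod_pos (fun t _ => (q t).pos)
    have hint : ∀ t, ∃ c : ℕ, (c : ℚ) = M * q t := by
      intro t
      obtain ⟨k, hk⟩ := Finset.dvd_prod_of_mem (fun t => (q t).den) (Finset.mem_univ t)
      refine ⟨(q t).num.toNat * k, ?_⟩
      have h1 : (((q t).num.toNat : ℕ) : ℚ) = ((q t).num : ℚ) := by
        norm_cast
        exact Int.toNat_of_nonneg (Rat.num_nonneg.mpr (hq0 t))
      have hMk : (M : ℚ) = ((q t).den : ℚ) * k := by
        rw [hM, hk]; push_cast; ring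
      push_cast [h1]
      rw [← Rat.mul_den_eq_num, hMk]
      ring
    choose c hc using hint
    refine ⟨M, c, hMpos, ?_, ?_⟩
    · intro t ht
      have : (c t : ℚ) = 0 := by rw [hc t, hqr t ht, mul_zero]
      exact_mod_cast this
    · funext k
      have hk := congrFun hqs k
      simp only [Finset.sum_apply, Pi.smul_apply, smul_eq_mul] at hk
      have : ((M • g j) k : ℚ) = (((∑ t, c t • g t) k : ℕ) : ℚ) := by
        simp only [Pi.smul_apply, smul_eq_mul, Finset.sum_apply]
        push_cast
        rw [hk, Finset.mul_sum]
        refine Finset.sum_congr rfl fun t _ => ?_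
        rw [← mul_assoc, ← hc t]
      exact_mod_cast this
  choose M c hMpos hcr hrel using key
  -- generators lie in S
  have hgS : ∀ t : Fin n, g t ∈ S := by
    intro t
    rw [hS]
    exact AddSubmonoid.subset_closure ⟨t, rfl⟩
  -- sums of multiples of generators lie in S
  have hsum : ∀ (a : Fin n → ℕ) (u : Finset (Fin n)), (∑ t ∈ u, a t • g t) ∈ S :=
    fun a u => AddSubmonoid.sum_mem S fun t _ => AddSubmonoid.nsmul_mem S (hgS t) (a t)
  -- representation of elements of S
  have hrep : ∀ s ∈ S, ∃ a : Fin n → ℕ, s = ∑ t, a t • g t := by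
    intro s hs
    rw [hS] at hs
    induction hs using AddSubmonoid.closure_induction with
    | mem x hx =>
      obtain ⟨j, rfl⟩ := hx
      refine ⟨fun t => if t = j then 1 else 0, ?_⟩
      simp [Finset.sum_ite_eq']
    | zero => exact ⟨0, by simp⟩
    | add x y hx hy ihx ihy =>
      obtain ⟨a, rfl⟩ := ihx
      obtain ⟨b, rfl⟩ := ihy
      exact ⟨a + b, by rw [← Finset.sum_add_distrib]; simp [add_smul]⟩
  -- pointwise bound on Apéry elements
  set B : Fin d → ℕ := fun k => ∑ j, M j * g j k with hB
  have hbound : {s : Fin d → ℕ | s ∈ S ∧ ∀ t : Fin n, t.val < r → ¬ ∃ y ∈ S, s = g t + y}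
      ⊆ Set.univ.pi fun k => Set.Iic (B k) := by
    rintro s ⟨hsS, hAp⟩ k -
    obtain ⟨a, rfl⟩ := hrep s hsS
    -- each coefficient is < M j
    have hcoef : ∀ j, a j ≤ M j := by
      intro j
      by_contra hle
      push_neg at hle
      -- find t₀ < r with c j t₀ > 0
      have hne : M j • g j ≠ 0 := by
        intro h0
        exact hg j (by simpa [hMpos j, (hMpos j).ne'] using smul_eq_zero.mp h0)
      obtain ⟨t₀, ht₀⟩ : ∃ t₀, 0 < c j t₀ := by
        by_contra hno
        push_neg at hno
        have : ∀ t, c j t = 0 := fun t => Nat.le_zero.mp (hno t)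
        exact hne (by simp [hrel j, this])
      have ht₀r : t₀.val < r := by
        by_contra hh
        simp [hcr j t₀ hh] at ht₀
      refine hAp t₀ ht₀r ⟨(c j t₀ - 1) • g t₀ + (∑ t ∈ Finset.univ.erase t₀, c j t • g t)
        + ((a j - M j) • g j + ∑ t ∈ Finset.univ.erase j, a t • g t), ?_, ?_⟩
      · exact S.add_mem (S.add_mem (S.nsmul_mem (hgS t₀) _) (hsum _ _))
          (S.add_mem (S.nsmul_mem (hgS j) _) (hsum _ _))
      · have e1 : g t₀ + (c j t₀ - 1) • g t₀ + (∑ t ∈ Finset.univ.erase t₀, c j t • g t)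
            = ∑ t, c j t • g t := by
          rw [← Finset.add_sum_erase _ _ (Finset.mem_univ t₀)]
          congr 1
          nth_rewrite 1 [← one_nsmul (g t₀)]
          rw [← add_nsmul]
          congr 1
          omega
        have e2 : (M j • g j) + ((a j - M j) • g j) = a j • g j := by
          rw [← add_nsmul]
          congr 1
          omega
        calc ∑ t, a t • g t
            = a j • g j + ∑ t ∈ Finset.univ.erase j, a t • g t :=
              (Finset.add_sum_erase _ _ (Finset.mem_univ j)).symm
          _ = (M j • g j + (a j - M j) • g j) + ∑ t ∈ Finset.univ.erase j, a t • g t := by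
              rw [e2]
          _ = (∑ t, c j t • g t) + ((a j - M j) • g j + ∑ t ∈ Finset.univ.erase j, a t • g t) := by
              rw [hrel j]; ring
          _ = g t₀ + ((c j t₀ - 1) • g t₀ + (∑ t ∈ Finset.univ.erase t₀, c j t • g t)
              + ((a j - M j) • g j + ∑ t ∈ Finset.univ.erase j, a t • g t)) := by
              rw [← e1]; ring
    -- conclude the bound
    simp only [Set.mem_Iic, hB, Finset.sum_apply, Pi.smul_apply, smul_eq_mul]
    exact Finset.sum_le_sum fun j _ => Nat.mul_le_mul_right _ (hcoef j)
  exact Set.Finite.subset (Set.Finite.pi fun k => Set.finite_Iic (B k)) hbound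
end
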